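/- arXiv:1501.06394 — 5 statements merged into one kernel-verified Lean document; each statement's English description precedes it below -/
import Mathlib

section
/- For every integer n > 3, F(n,2) = 3(2^{n−3} − 1), where F(n,k) is the largest content of a league of rank k on {1,...,n}. -/
/-- `A` is a transversal of the partition `Q` of `{1,…,n}` if it contains exactly one
element of each part of `Q`. -/
def IsTransversal {n : ℕ} (A : Finset (Fin n))
    (Q : Finpartition (Finset.univ : Finset (Fin n))) : Prop :=
  ∀ p ∈ Q.parts, (A ∩ p).card = 1

/-- A league of rank `k` on `{1,…,n}`: a pair `(P, T)` where `P` is a set of partitions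
of `{1,…,n}` into `k` parts and `T` is a set of `k`-element subsets of `{1,…,n}`, such
that no member of `T` is a transversal of any member of `P`. -/
def IsLeague (n k : ℕ) (P : Set (Finpartition (Finset.univ : Finset (Fin n))))
    (T : Set (Finset (Fin n))) : Prop :=
  (∀ Q ∈ P, Q.parts.card = k) ∧ (∀ A ∈ T, A.card = k) ∧
    ∀ Q ∈ P, ∀ A ∈ T, ¬ IsTransversal A Q

/-- `F(n,k)`: the largest content `|P|·|T|` of a league `(P, T)` of rank `k` on
`{1,…,n}`. -/
noncomputable def leagueF (n k : ℕ) : ℕ :=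
  sSup {m : ℕ | ∃ P T, IsLeague n k P T ∧ m = P.ncard * T.ncard}

open Finset

lemma parts_pair_eq {n : ℕ} (Q : Finpartition (Finset.univ : Finset (Fin n)))
    (hQ : Q.parts.card = 2) {p : Finset (Fin n)} (hp : p ∈ Q.parts) :
    Q.parts = {p, pᶜ} := by
  obtain ⟨a, b, hab, hparts⟩ := Finset.card_eq_two.mp hQ
  -- wlog p = a
  have hmem : p = a ∨ p = b := by
    rw [hparts] at hp; simpa using hp
  have key : ∀ x y : Finset (Fin n), x ≠ y → Q.parts = {x, y} → y = xᶜ := by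
    intro x y hxy hxy'
    have hdis : Disjoint x y := by
      have := Q.supIndep
      rw [hxy'] at this
      exact (Finset.supIndep_pair hxy).mp this
    have hsup : x ∪ y = univ := by
      have := Q.sup_parts
      rw [hxy'] at this
      simpa [Finset.sup_insert, Finset.sup_singleton] using this
    ext v
    simp only [Finset.mem_compl]
    constructor
    · intro hv hvx
      exact (Finset.disjoint_left.mp hdis) hvx hv
    · intro hv
      have : v ∈ x ∪ y := by rw [hsup]; exact Finset.mem_univ v
      rcases Finset.mem_union.mp this with h | h
      · exact absurd h hv
      · exact h
  rcases hmem with rfl | rfl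
  · rw [hparts, key p b hab hparts]
  · have h2 : Q.parts = {p, a} := by rw [hparts]; exact Finset.pair_comm a p
    rw [h2, key p a (Ne.symm hab) h2, Finset.pair_comm]

lemma not_transversal_cases {n : ℕ} {A p : Finset (Fin n)} (hA : A.card = 2)
    {Q : Finpartition (Finset.univ : Finset (Fin n))} (hparts : Q.parts = {p, pᶜ})
    (h : ¬ IsTransversal A Q) : A ⊆ p ∨ A ⊆ pᶜ := by
  have hsplit : (A ∩ p).card + (A ∩ pᶜ).card = 2 := by
    have h1 : A ∩ pᶜ = A \ p := by ext v; simp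
    rw [h1, Finset.card_inter_add_card_sdiff, hA]
  simp only [IsTransversal, not_forall] at h
  obtain ⟨q, hq, hq1⟩ := h
  rw [hparts] at hq
  have hcases : (A ∩ p).card ≠ 1 ∨ (A ∩ pᶜ).card ≠ 1 := by
    rcases Finset.mem_insert.mp hq with rfl | hq'
    · exact Or.inl hq1
    · exact Or.inr (by rwa [Finset.mem_singleton.mp hq'] at hq1)
  have h02 : (A ∩ p).card = 2 ∨ (A ∩ pᶜ).card = 2 := by omega
  rcases h02 with h2 | h2
  · left
    have := Finset.eq_of_subset_of_card_le (Finset.inter_subset_left : A ∩ p ⊆ A) (by omega)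
    rw [← Finset.inter_eq_left]; exact this
  · right
    have := Finset.eq_of_subset_of_card_le (Finset.inter_subset_left : A ∩ pᶜ ⊆ A) (by omega)
    rw [← Finset.inter_eq_left]; exact this

lemma not_transversal_of_subset {n : ℕ} {A p : Finset (Fin n)} (hA : A.card = 2)
    {Q : Finpartition (Finset.univ : Finset (Fin n))} (hp : p ∈ Q.parts)
    (hsub : A ⊆ p) : ¬ IsTransversal A Q := by
  intro h
  have := h p hp
  rw [Finset.inter_eq_left.mpr hsub, hA] at this
  omega

def twoPart {n : ℕ} (B : Finset (Fin n)) : Finpartition (Finset.univ : Finset (Fin n)) :=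
  if h : B.Nonempty ∧ Bᶜ.Nonempty then
    { parts := {B, Bᶜ}
      supIndep := by
        have hne : B ≠ Bᶜ := by
          obtain ⟨x, hx⟩ := h.1
          intro he
          have hx' : x ∈ Bᶜ := he ▸ hx
          exact (Finset.mem_compl.mp hx') hx
        exact (Finset.supIndep_pair hne).mpr disjoint_compl_right
      sup_parts := by
        simp [Finset.sup_insert, Finset.sup_singleton]
      bot_notMem := by
        simp only [Finset.bot_eq_empty, Finset.mem_insert, Finset.mem_singleton]
        push_neg
        constructor
        · exact fun he => h.1.ne_empty he.symm
        · exact fun he => h.2.ne_empty he.symm }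
  else ⊥

lemma twoPart_parts {n : ℕ} {B : Finset (Fin n)} (h : B.Nonempty ∧ Bᶜ.Nonempty) :
    (twoPart B).parts = {B, Bᶜ} := by
  rw [twoPart, dif_pos h]


lemma two_mul_choose_two (m : ℕ) : 2 * m.choose 2 = m * (m - 1) := by
  induction m with
  | zero => simp
  | succ m ih =>
    rw [Nat.choose_succ_succ, Nat.mul_add, ih, Nat.choose_one_right]
    cases m with
    | zero => simp
    | succ t => simp only [Nat.succ_sub_one]; ring

lemma sum_choose_two_le {β : Type*} (s : Finset β) (f : β → ℕ) (hf : ∀ i ∈ s, 1 ≤ f i) :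
    ∑ i ∈ s, (f i).choose 2 ≤ ((∑ i ∈ s, (f i - 1)) + 1).choose 2 := by
  set M := ∑ i ∈ s, (f i - 1) with hM
  have h2 : 2 * ∑ i ∈ s, (f i).choose 2 = ∑ i ∈ s, (f i - 1) * f i := by
    rw [Finset.mul_sum]
    exact Finset.sum_congr rfl fun i _ => by rw [two_mul_choose_two, Nat.mul_comm]
  have h3 : ∑ i ∈ s, (f i - 1) * f i ≤ M * (M + 1) := by
    calc ∑ i ∈ s, (f i - 1) * f i ≤ ∑ i ∈ s, (f i - 1) * (M + 1) := by
          refine Finset.sum_le_sum fun i hi => Nat.mul_le_mul_left _ ?_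
          have h1 : f i - 1 ≤ M := Finset.single_le_sum (f := fun i => f i - 1)
            (fun i _ => Nat.zero_le _) hi
          omega
      _ = M * (M + 1) := by rw [← Finset.sum_mul]
  have h4 : 2 * ((M + 1).choose 2) = M * (M + 1) := by
    rw [two_mul_choose_two]; simp [Nat.mul_comm]
  exact Nat.le_of_mul_le_mul_left (by omega) two_pos

lemma mul_self_le_pow (j : ℕ) (hj : 2 ≤ j) : j * (j + 1) ≤ 3 * 2 ^ (j - 1) := by
  induction j with
  | zero => omega
  | succ t ih =>
    rcases Nat.lt_or_ge t 2 with h | h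
    · interval_cases t <;> simp <;> omega
    · have ht := ih (by omega)
      have h1 : t + 1 - 1 = (t - 1) + 1 := by omega
      rw [h1, pow_succ]
      have : (t+1) * (t+1+1) ≤ 2 * (t * (t+1)) := by nlinarith
      omega

lemma jk_ineq (j k : ℕ) (hj : 1 ≤ j) (hjk : 2 ≤ j + k) :
    (2 ^ (k + 1) - 1) * (j + 1).choose 2 ≤ 3 * (2 ^ (j + k - 1) - 1) := by
  rcases Nat.lt_or_ge j 2 with h | h
  · -- j = 1, k ≥ 1
    have hj1 : j = 1 := by omega
    subst hj1
    have hk : 1 ≤ k := by omega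
    have h2 : (2:ℕ) ≤ 2 ^ k := by
      calc (2:ℕ) = 2^1 := rfl
      _ ≤ 2^k := Nat.pow_le_pow_right (by norm_num) hk
    have e1 : (2:ℕ) ^ (k+1) = 2 * 2^k := by rw [pow_succ, Nat.mul_comm]
    have e2 : 1 + k - 1 = k := by omega
    rw [e2]
    simp only [Nat.choose_self, e1]
    omega
  · -- j ≥ 2
    have hc : (j + 1).choose 2 ≤ 3 * 2 ^ (j - 2) := by
      have h1 := mul_self_le_pow j h
      have h2 : 2 * ((j+1).choose 2) = j * (j + 1) := by
        rw [two_mul_choose_two]; simp [Nat.mul_comm]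
      have h3 : (3:ℕ) * 2 ^ (j-1) = 2 * (3 * 2^(j-2)) := by
        have : j - 1 = (j - 2) + 1 := by omega
        rw [this, pow_succ]; ring
      omega
    calc (2 ^ (k + 1) - 1) * (j + 1).choose 2
        ≤ (2 ^ (k + 1) - 1) * (3 * 2 ^ (j - 2)) := Nat.mul_le_mul_left _ hc
      _ = 3 * ((2 ^ (k + 1) - 1) * 2 ^ (j - 2)) := by ring
      _ = 3 * (2 ^ (k + 1) * 2 ^ (j - 2) - 2 ^ (j - 2)) := by rw [Nat.sub_mul, one_mul]
      _ = 3 * (2 ^ (j + k - 1) - 2 ^ (j - 2)) := by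
          rw [← pow_add, show k + 1 + (j - 2) = j + k - 1 by omega]
      _ ≤ 3 * (2 ^ (j + k - 1) - 1) := by
          have : (1:ℕ) ≤ 2 ^ (j - 2) := Nat.one_le_two_pow
          exact Nat.mul_le_mul_left _ (Nat.sub_le_sub_left this _)
lemma league_bound {n : ℕ} (hn : 4 ≤ n) {P : Set (Finpartition (Finset.univ : Finset (Fin n)))}
    {T : Set (Finset (Fin n))} (h : IsLeague n 2 P T) :
    P.ncard * T.ncard ≤ 3 * (2 ^ (n - 3) - 1) := by
  classical
  obtain ⟨hP, hT, hPT⟩ := h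
  set z : Fin n := ⟨0, by omega⟩ with hz
  set R : Fin n → Fin n → Prop := fun a b => ({a, b} : Finset (Fin n)) ∈ T with hR
  set s : Setoid (Fin n) := Relation.EqvGen.setoid R with hs
  have : Fintype (Quotient s) := Fintype.ofFinite _
  set c : ℕ := Fintype.card (Quotient s) with hc
  have key0 : ∀ Q ∈ P, ∀ a b : Fin n, R a b → (a ∈ Q.part z ↔ b ∈ Q.part z) := by
    intro Q hQ a b hab
    have hcard : ({a, b} : Finset (Fin n)).card = 2 := hT _ hab
    have hparts := parts_pair_eq Q (hP Q hQ) (Q.part_mem.mpr (Finset.mem_univ z))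
    have hnt := hPT Q hQ _ hab
    have hmem_a : a ∈ ({a, b} : Finset (Fin n)) := by simp
    have hmem_b : b ∈ ({a, b} : Finset (Fin n)) := by simp
    rcases not_transversal_cases hcard hparts hnt with hsub | hsub
    · exact iff_of_true (hsub hmem_a) (hsub hmem_b)
    · exact iff_of_false (Finset.mem_compl.mp (hsub hmem_a))
        (Finset.mem_compl.mp (hsub hmem_b))
  have key : ∀ Q ∈ P, ∀ a b : Fin n, Relation.EqvGen R a b →
      (a ∈ Q.part z ↔ b ∈ Q.part z) := by
    intro Q hQ a b hab
    induction hab with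
    | rel x y hxy => exact key0 Q hQ x y hxy
    | refl x => exact Iff.rfl
    | symm x y _ ih => exact ih.symm
    | trans x y w _ _ ih1 ih2 => exact ih1.trans ih2
  set Ψ : Finpartition (Finset.univ : Finset (Fin n)) → Finset (Quotient s) :=
    fun Q => Finset.univ.filter (fun C => ∃ v : Fin n, Quotient.mk s v = C ∧ v ∉ Q.part z)
    with hΨ
  have hΨz : ∀ Q ∈ P, Quotient.mk s z ∉ Ψ Q := by
    intro Q hQ hmem
    simp only [Ψ, Finset.mem_filter] at hmem
    obtain ⟨-, v, hv, hvp⟩ := hmem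
    have hvz : Relation.EqvGen R v z := Quotient.exact hv
    exact hvp ((key Q hQ v z hvz).mpr (Q.mem_part (Finset.mem_univ z)))
  have hΨne : ∀ Q ∈ P, (Ψ Q).Nonempty := by
    intro Q hQ
    have hparts := parts_pair_eq Q (hP Q hQ) (Q.part_mem.mpr (Finset.mem_univ z))
    have hpc : (Q.part z)ᶜ ∈ Q.parts := by rw [hparts]; simp
    have hne := Q.ne_bot hpc
    have hpcne : ((Q.part z)ᶜ : Finset (Fin n)).Nonempty :=
      Finset.nonempty_iff_ne_empty.mpr (by simpa using hne)
    obtain ⟨v, hv⟩ := hpcne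
    refine ⟨Quotient.mk s v, ?_⟩
    simp only [Ψ, Finset.mem_filter]
    exact ⟨Finset.mem_univ _, v, rfl, Finset.mem_compl.mp hv⟩
  have hiff : ∀ Q ∈ P, ∀ v : Fin n, (v ∉ Q.part z ↔ Quotient.mk s v ∈ Ψ Q) := by
    intro Q hQ v
    constructor
    · intro hv
      simp only [Ψ, Finset.mem_filter]
      exact ⟨Finset.mem_univ _, v, rfl, hv⟩
    · intro hv
      simp only [Ψ, Finset.mem_filter] at hv
      obtain ⟨-, w, hw, hwp⟩ := hv
      have hwv : Relation.EqvGen R w v := Quotient.exact hw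
      exact fun hvp => hwp ((key Q hQ w v hwv).mpr hvp)
  have hΨinj : ∀ Q ∈ P, ∀ Q' ∈ P, Ψ Q = Ψ Q' → Q = Q' := by
    intro Q hQ Q' hQ' he
    have hpp : Q.part z = Q'.part z := by
      ext v
      have h1 := hiff Q hQ v
      have h2 := hiff Q' hQ' v
      rw [he] at h1
      exact not_iff_not.mp (h1.trans h2.symm)
    have e1 := parts_pair_eq Q (hP Q hQ) (Q.part_mem.mpr (Finset.mem_univ z))
    have e2 := parts_pair_eq Q' (hP Q' hQ') (Q'.part_mem.mpr (Finset.mem_univ z))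
    exact Finpartition.ext (by rw [e1, e2, hpp])
  set 𝒜 : Finset (Finset (Quotient s)) :=
    ((Finset.univ.erase (Quotient.mk s z)).powerset.erase ∅) with h𝒜
  have hA : ∀ Q ∈ P, Ψ Q ∈ 𝒜 := by
    intro Q hQ
    simp only [𝒜, Finset.mem_erase, Finset.mem_powerset]
    refine ⟨Finset.nonempty_iff_ne_empty.mp (hΨne Q hQ), ?_⟩
    intro C hC
    exact Finset.mem_erase.mpr ⟨fun he => hΨz Q hQ (he ▸ hC), Finset.mem_univ C⟩
  have hPcard : P.ncard ≤ 2 ^ (c - 1) - 1 := by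
    have hinj : Function.Injective
        (fun Q : P => (⟨Ψ Q.1, hA Q.1 Q.2⟩ : {S // S ∈ 𝒜})) := by
      intro Q Q' hQQ
      have := congrArg Subtype.val hQQ
      exact Subtype.ext (hΨinj Q.1 Q.2 Q'.1 Q'.2 this)
    have h1 : Nat.card P ≤ Nat.card {S // S ∈ 𝒜} := Nat.card_le_card_of_injective _ hinj
    have h1' : Nat.card {S // S ∈ 𝒜} = 𝒜.card := by
      rw [Nat.card_eq_fintype_card, Fintype.card_coe]
    have h2 : 𝒜.card = 2 ^ (c - 1) - 1 := by
      rw [h𝒜, Finset.card_erase_of_mem (Finset.empty_mem_powerset _), Finset.card_powerset,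
        Finset.card_erase_of_mem (Finset.mem_univ _), Finset.card_univ, ← hc]
    rw [← Nat.card_coe_set_eq, ← h2, ← h1']
    exact h1
  set cls : Quotient s → Finset (Fin n) :=
    fun C => Finset.univ.filter (fun v => Quotient.mk s v = C) with hcls
  set 𝒯 : Finset (Finset (Fin n)) :=
    Finset.univ.biUnion (fun C : Quotient s => (cls C).powersetCard 2) with h𝒯
  have hTsub : T ⊆ ↑𝒯 := by
    intro A hA'
    obtain ⟨a, b, hab, hA2⟩ := Finset.card_eq_two.mp (hT A hA')
    have hr : Relation.EqvGen R a b :=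
      Relation.EqvGen.rel a b (show ({a, b} : Finset (Fin n)) ∈ T from hA2 ▸ hA')
    refine Finset.mem_coe.mpr (Finset.mem_biUnion.mpr ⟨Quotient.mk s a, Finset.mem_univ _, ?_⟩)
    rw [Finset.mem_powersetCard]
    refine ⟨?_, hT A hA'⟩
    intro v hv
    rw [hA2] at hv
    rcases Finset.mem_insert.mp hv with rfl | hv'
    · simp only [cls, Finset.mem_filter]
      exact ⟨Finset.mem_univ _, trivial⟩
    · rw [Finset.mem_singleton.mp hv']
      simp only [cls, Finset.mem_filter]
      exact ⟨Finset.mem_univ _, (Quot.sound hr).symm⟩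
  have hdisj : ∀ C ∈ (Finset.univ : Finset (Quotient s)), ∀ C' ∈ Finset.univ, C ≠ C' →
      Disjoint ((cls C).powersetCard 2) ((cls C').powersetCard 2) := by
    intro C _ C' _ hne
    rw [Finset.disjoint_left]
    intro A hA1 hA2
    rw [Finset.mem_powersetCard] at hA1 hA2
    have hApos : A.Nonempty := Finset.card_pos.mp (by rw [hA1.2]; norm_num)
    obtain ⟨v, hv⟩ := hApos
    have h1 : Quotient.mk s v = C := by
      have := hA1.1 hv; simp only [cls, Finset.mem_filter] at this; exact this.2
    have h2 : Quotient.mk s v = C' := by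
      have := hA2.1 hv; simp only [cls, Finset.mem_filter] at this; exact this.2
    exact hne (h1 ▸ h2 ▸ rfl)
  have hTcard : T.ncard ≤ ∑ C : Quotient s, ((cls C).card).choose 2 := by
    have h1 : T.ncard ≤ 𝒯.card := by
      have := Set.ncard_le_ncard hTsub (Finset.finite_toSet 𝒯)
      rwa [Set.ncard_coe_finset] at this
    refine h1.trans (le_of_eq ?_)
    rw [h𝒯, Finset.card_biUnion hdisj]
    exact Finset.sum_congr rfl fun C _ => by rw [Finset.card_powersetCard]
  have hmpos : ∀ C : Quotient s, 1 ≤ (cls C).card := by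
    intro C
    obtain ⟨v, hv⟩ := Quotient.exists_rep C
    refine Finset.card_pos.mpr ⟨v, ?_⟩
    simp only [cls, Finset.mem_filter]
    exact ⟨Finset.mem_univ _, hv⟩
  have hsum : ∑ C : Quotient s, (cls C).card = n := by
    have h0 := Finset.card_eq_sum_card_fiberwise
      (f := fun v : Fin n => Quotient.mk s v) (s := Finset.univ) (t := Finset.univ)
      (fun x _ => Finset.mem_univ _)
    rw [Finset.card_univ, Fintype.card_fin] at h0
    exact h0.symm
  have hcn : c ≤ n := by
    have h1 : Fintype.card (Quotient s) ≤ Fintype.card (Fin n) :=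
      Fintype.card_le_of_surjective (Quotient.mk s) Quotient.exists_rep
    rwa [Fintype.card_fin, ← hc] at h1
  have hc1 : 1 ≤ c := by
    rw [hc]
    exact Fintype.card_pos_iff.mpr ⟨Quotient.mk s z⟩
  have hsum1 : ∑ C : Quotient s, ((cls C).card - 1) = n - c := by
    have h1 : ∑ C : Quotient s, (((cls C).card - 1) + 1) = ∑ C : Quotient s, (cls C).card :=
      Finset.sum_congr rfl fun C _ => by have := hmpos C; omega
    rw [Finset.sum_add_distrib, hsum] at h1
    simp only [Finset.sum_const, Finset.card_univ, smul_eq_mul, mul_one] at h1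
    omega
  have hT2 : T.ncard ≤ (n - c + 1).choose 2 := by
    refine hTcard.trans ?_
    have h1 := sum_choose_two_le Finset.univ (fun C : Quotient s => (cls C).card)
      (fun C _ => hmpos C)
    rwa [hsum1] at h1
  calc P.ncard * T.ncard ≤ (2 ^ (c - 1) - 1) * (n - c + 1).choose 2 :=
        Nat.mul_le_mul hPcard hT2
    _ ≤ 3 * (2 ^ (n - 3) - 1) := by
      rcases eq_or_lt_of_le hc1 with h1 | h1
      · rw [← h1]; simp
      rcases eq_or_lt_of_le hcn with h2 | h2
      · rw [h2, Nat.sub_self]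
        simp
      · have h3 := jk_ineq (n - c) (c - 2) (by omega) (by omega)
        rw [show c - 1 = (c - 2) + 1 by omega] at *
        rw [show n - 3 = (n - c) + (c - 2) - 1 by omega]
        exact h3
lemma league_construct {n : ℕ} (hn : 4 ≤ n) :
    ∃ P T, IsLeague n 2 P T ∧ 3 * (2 ^ (n - 3) - 1) = P.ncard * T.ncard := by
  classical
  set x0 : Fin n := ⟨0, by omega⟩ with hx0
  set x1 : Fin n := ⟨1, by omega⟩ with hx1
  set x2 : Fin n := ⟨2, by omega⟩ with hx2
  have h01 : x0 ≠ x1 := by simp [hx0, hx1, Fin.ext_iff]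
  have h02 : x0 ≠ x2 := by simp [hx0, hx2, Fin.ext_iff]
  have h12 : x1 ≠ x2 := by simp [hx1, hx2, Fin.ext_iff]
  set K : Finset (Fin n) := {x0, x1, x2} with hK
  have hKcard : K.card = 3 := by
    rw [hK, Finset.card_insert_of_notMem (by simp [h01, h02]),
      Finset.card_insert_of_notMem (by simp [h12]), Finset.card_singleton]
  set T : Set (Finset (Fin n)) :=
    ↑({{x0, x1}, {x0, x2}, {x1, x2}} : Finset (Finset (Fin n))) with hT
  set 𝒮 : Finset (Finset (Fin n)) := Kᶜ.powerset.erase Kᶜ with h𝒮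
  set P : Set (Finpartition (Finset.univ : Finset (Fin n))) :=
    (fun S => twoPart (K ∪ S)) '' ↑𝒮 with hPdef
  have hSprop : ∀ S ∈ 𝒮, S ⊆ Kᶜ ∧ S ≠ Kᶜ := by
    intro S hS
    rw [h𝒮, Finset.mem_erase, Finset.mem_powerset] at hS
    exact ⟨hS.2, hS.1⟩
  have hBprop : ∀ S ∈ 𝒮, (K ∪ S).Nonempty ∧ (K ∪ S)ᶜ.Nonempty := by
    intro S hS
    obtain ⟨hSsub, hSne⟩ := hSprop S hS
    refine ⟨⟨x0, by simp [hK]⟩, ?_⟩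
    obtain ⟨v, hv1, hv2⟩ : ∃ v, v ∈ Kᶜ ∧ v ∉ S := by
      by_contra hcon
      push_neg at hcon
      exact hSne (Finset.Subset.antisymm hSsub hcon)
    refine ⟨v, Finset.mem_compl.mpr ?_⟩
    intro hv
    rcases Finset.mem_union.mp hv with h | h
    · exact (Finset.mem_compl.mp hv1) h
    · exact hv2 h
  have hx0K : x0 ∈ K := by simp [hK]
  have hx0B : ∀ S : Finset (Fin n), x0 ∈ K ∪ S := fun S => Finset.mem_union_left _ hx0K
  have hTcards : ∀ A ∈ T, A.card = 2 := by
    intro A hA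
    simp only [hT, Finset.coe_insert, Set.mem_insert_iff, Finset.coe_singleton,
      Set.mem_singleton_iff, Finset.mem_coe, Finset.mem_insert, Finset.mem_singleton] at hA
    rcases hA with rfl | rfl | rfl
    · exact Finset.card_pair h01
    · exact Finset.card_pair h02
    · exact Finset.card_pair h12
  have hTsubK : ∀ A ∈ T, A ⊆ K := by
    intro A hA
    simp only [hT, Finset.coe_insert, Set.mem_insert_iff, Finset.coe_singleton,
      Set.mem_singleton_iff, Finset.mem_coe, Finset.mem_insert, Finset.mem_singleton] at hA
    rcases hA with rfl | rfl | rfl <;>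
      · intro v hv
        rcases Finset.mem_insert.mp hv with rfl | hv'
        · simp [hK]
        · rw [Finset.mem_singleton.mp hv']; simp [hK]
  have hLeague : IsLeague n 2 P T := by
    refine ⟨?_, hTcards, ?_⟩
    · rintro Q ⟨S, hS, rfl⟩
      rw [twoPart_parts (hBprop S (by exact_mod_cast hS))]
      refine Finset.card_pair ?_
      intro he
      have h1 : x0 ∈ (K ∪ S)ᶜ := he ▸ hx0B S
      exact (Finset.mem_compl.mp h1) (hx0B S)
    · rintro Q ⟨S, hS, rfl⟩ A hA
      have hS' : S ∈ 𝒮 := by exact_mod_cast hS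
      have hBparts : (K ∪ S) ∈ (twoPart (K ∪ S)).parts := by
        rw [twoPart_parts (hBprop S hS')]
        exact Finset.mem_insert_self _ _
      exact not_transversal_of_subset (hTcards A hA) hBparts
        ((hTsubK A hA).trans Finset.subset_union_left)
  have hTncard : T.ncard = 3 := by
    have e1 : ({x0, x1} : Finset (Fin n)) ≠ {x0, x2} := by
      intro he
      have : x1 ∈ ({x0, x2} : Finset (Fin n)) := he ▸ by simp
      simp only [Finset.mem_insert, Finset.mem_singleton] at this
      rcases this with h | h
      · exact h01 h.symm
      · exact h12 h
    have e2 : ({x0, x1} : Finset (Fin n)) ≠ {x1, x2} := by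
      intro he
      have : x0 ∈ ({x1, x2} : Finset (Fin n)) := he ▸ by simp
      simp only [Finset.mem_insert, Finset.mem_singleton] at this
      rcases this with h | h
      · exact h01 h
      · exact h02 h
    have e3 : ({x0, x2} : Finset (Fin n)) ≠ {x1, x2} := by
      intro he
      have : x0 ∈ ({x1, x2} : Finset (Fin n)) := he ▸ by simp
      simp only [Finset.mem_insert, Finset.mem_singleton] at this
      rcases this with h | h
      · exact h01 h
      · exact h02 h
    rw [hT, Set.ncard_coe_finset]
    rw [Finset.card_insert_of_notMem (by simp [e1, e2]),
      Finset.card_insert_of_notMem (by simp [e3]), Finset.card_singleton]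
  have hPncard : P.ncard = 2 ^ (n - 3) - 1 := by
    have hinj : Set.InjOn (fun S => twoPart (K ∪ S)) ↑𝒮 := by
      intro S hS S' hS' he
      have hS1 : S ∈ 𝒮 := by exact_mod_cast hS
      have hS1' : S' ∈ 𝒮 := by exact_mod_cast hS'
      have hp1 := twoPart_parts (hBprop S hS1)
      have hp2 := twoPart_parts (hBprop S' hS1')
      have he' : twoPart (K ∪ S) = twoPart (K ∪ S') := he
      have hpe : ({K ∪ S, (K ∪ S)ᶜ} : Finset (Finset (Fin n))) = {K ∪ S', (K ∪ S')ᶜ} := by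
        rw [← hp1, ← hp2, he']
      have hBB : K ∪ S = K ∪ S' := by
        have h1 : K ∪ S ∈ ({K ∪ S', (K ∪ S')ᶜ} : Finset (Finset (Fin n))) := by
          rw [← hpe]; exact Finset.mem_insert_self _ _
        rcases Finset.mem_insert.mp h1 with h | h
        · exact h
        · rw [Finset.mem_singleton] at h
          exfalso
          have : x0 ∈ (K ∪ S')ᶜ := h ▸ hx0B S
          exact (Finset.mem_compl.mp this) (hx0B S')
      have hrec : ∀ W : Finset (Fin n), W ∈ 𝒮 → W = (K ∪ W) ∩ Kᶜ := by
        intro W hW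
        obtain ⟨hWsub, -⟩ := hSprop W hW
        ext v
        simp only [Finset.mem_inter, Finset.mem_union, Finset.mem_compl]
        constructor
        · intro hv
          exact ⟨Or.inr hv, Finset.mem_compl.mp (hWsub hv)⟩
        · rintro ⟨hv1 | hv1, hv2⟩
          · exact absurd hv1 hv2
          · exact hv1
      rw [hrec S hS1, hrec S' hS1', hBB]
    rw [hPdef, Set.ncard_image_of_injOn hinj, Set.ncard_coe_finset, h𝒮,
      Finset.card_erase_of_mem (Finset.mem_powerset_self _), Finset.card_powerset,
      Finset.card_compl, hKcard, Fintype.card_fin]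
  exact ⟨P, T, hLeague, by rw [hTncard, hPncard]; ring⟩

/-- For every integer `n > 3`, `F(n,2) = 3(2^(n−3) − 1)`. -/
theorem leagueF_two (n : ℕ) (hn : 3 < n) :
    leagueF n 2 = 3 * (2 ^ (n - 3) - 1) := by
  have hn4 : 4 ≤ n := hn
  obtain ⟨P0, T0, hL, hcard⟩ := league_construct hn4
  have hmem : 3 * (2 ^ (n - 3) - 1) ∈
      {m : ℕ | ∃ P T, IsLeague n 2 P T ∧ m = P.ncard * T.ncard} :=
    ⟨P0, T0, hL, hcard⟩
  have hub : ∀ m ∈ {m : ℕ | ∃ P T, IsLeague n 2 P T ∧ m = P.ncard * T.ncard},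
      m ≤ 3 * (2 ^ (n - 3) - 1) := by
    rintro m ⟨P, T, hPT, rfl⟩
    exact league_bound hn4 hPT
  refine le_antisymm (csSup_le ⟨_, hmem⟩ hub) (le_csSup ⟨_, hub⟩ hmem)
end

section
/- For every integer n ≥ 2, the length of the semigroup O_n of order-preserving transformations of the chain {1,...,n} satisfies l(O_n) ≥ C(2n−3, n) − 1, where C denotes the binomial coefficient. -/
/-- The length of a semigroup `M` (stated for any multiplicative structure): the largest
number of non-empty subsemigroups of `M` in a chain, minus 1; equivalently the largest
`k` for which there is a strictly increasing chain of `k + 1` non-empty subsemigroups. -/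
noncomputable def semigroupLength (M : Type*) [Mul M] : ℕ :=
  sSup {k : ℕ | ∃ c : Fin (k + 1) → Subsemigroup M,
    StrictMono c ∧ ∀ i, ((c i : Set M)).Nonempty}

/-- `O_n`: the semigroup of all order-preserving transformations of the chain
`{1,…,n}`, as a subsemigroup of the full transformation semigroup. -/
def orderPreservingSemigroup (n : ℕ) : Subsemigroup (Function.End (Fin n)) where
  carrier := {f | Monotone f}
  mul_mem' := fun {a b} ha hb => Monotone.comp ha hb

namespace OPChain

variable {n : ℕ}

/-- The rank of an order preserving map: the size of its image. -/
def rk (f : orderPreservingSemigroup n) : ℕ :=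
  (Finset.univ.image (f.val : Fin n → Fin n)).card

/-- The special set: maps avoiding the value `0`, with `f 0` strictly below all other values. -/
def sp [NeZero n] (f : orderPreservingSemigroup n) : Prop :=
  (∀ x : Fin n, (f.val : Fin n → Fin n) x ≠ 0) ∧
    (∀ x : Fin n, x ≠ 0 → (f.val : Fin n → Fin n) 0 < (f.val : Fin n → Fin n) x)

lemma coe_mul_apply (a b : orderPreservingSemigroup n) (x : Fin n) :
    ((a * b).val : Fin n → Fin n) x
      = (a.val : Fin n → Fin n) ((b.val : Fin n → Fin n) x) := rfl

lemma rk_mul_le_left (a b : orderPreservingSemigroup n) : rk (a * b) ≤ rk a := by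
  apply Finset.card_le_card
  intro y hy
  replace hy := Finset.mem_image.mp hy
  refine Finset.mem_image.mpr ?_
  obtain ⟨x, -, hx⟩ := hy
  exact ⟨(b.val : Fin n → Fin n) x, Finset.mem_univ _, hx⟩

lemma rk_mul_le_right (a b : orderPreservingSemigroup n) : rk (a * b) ≤ rk b := by
  have h : (Finset.univ.image ((a * b).val : Fin n → Fin n))
      = (Finset.univ.image (b.val : Fin n → Fin n)).image (a.val : Fin n → Fin n) := by
    refine Eq.trans ?_ Finset.image_image.symm
    rfl
  rw [rk, h]
  exact le_trans Finset.card_image_le le_rfl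

lemma rk_mul_lt [NeZero n] (a b : orderPreservingSemigroup n)
    (ha : sp a) (hb : sp b) : rk (a * b) < rk a := by
  have hsub : (Finset.univ.image ((a * b).val : Fin n → Fin n))
      ⊆ (Finset.univ.image (a.val : Fin n → Fin n)).erase ((a.val : Fin n → Fin n) 0) := by
    intro y hy
    replace hy := Finset.mem_image.mp hy
    obtain ⟨x, -, hx⟩ := hy
    refine Finset.mem_erase.mpr ?_
    constructor
    · rw [← hx, coe_mul_apply]
      exact (ne_of_lt (ha.2 _ (hb.1 x))).symm
    · refine Finset.mem_image.mpr ?_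
      exact ⟨(b.val : Fin n → Fin n) x, Finset.mem_univ _, hx⟩
  calc rk (a * b) ≤ _ := Finset.card_le_card hsub
    _ < rk a := Finset.card_erase_lt_of_mem
        (Finset.mem_image_of_mem _ (Finset.mem_univ (0 : Fin n)))

/-- An injection of the semigroup into `ℕ`. -/
noncomputable def om (f : orderPreservingSemigroup n) : ℕ :=
  (Fintype.equivFin (Fin n → Fin n) (f.val : Fin n → Fin n)).val

lemma om_lt (f : orderPreservingSemigroup n) :
    om f < Fintype.card (Fin n → Fin n) :=
  (Fintype.equivFin (Fin n → Fin n) (f.val : Fin n → Fin n)).isLt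

lemma om_inj : Function.Injective (om (n := n)) := by
  intro f g h
  have h2 : (f.val : Fin n → Fin n) = (g.val : Fin n → Fin n) :=
    (Fintype.equivFin (Fin n → Fin n)).injective (Fin.val_injective h)
  exact Subtype.ext h2

/-- The key: a weight combining rank (most significant) and an arbitrary injection. -/
noncomputable def kp (f : orderPreservingSemigroup n) : ℕ :=
  rk f * Fintype.card (Fin n → Fin n) + om f

lemma kp_lt_of_rk_lt {f g : orderPreservingSemigroup n} (h : rk f < rk g) :
    kp f < kp g := by
  have h1 : kp f < (rk f + 1) * Fintype.card (Fin n → Fin n) := by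
    rw [add_mul, one_mul]
    exact Nat.add_lt_add_left (om_lt f) _
  have h2 : (rk f + 1) * Fintype.card (Fin n → Fin n)
      ≤ rk g * Fintype.card (Fin n → Fin n) :=
    Nat.mul_le_mul_right _ h
  exact lt_of_lt_of_le h1 (le_trans h2 (Nat.le_add_right _ _))

lemma kp_cases {f g : orderPreservingSemigroup n} (h : kp f < kp g) :
    rk f < rk g ∨ (rk f = rk g ∧ om f < om g) := by
  rcases lt_trichotomy (rk f) (rk g) with h' | h' | h'
  · exact Or.inl h'
  · right
    refine ⟨h', ?_⟩
    unfold kp at h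
    rw [h'] at h
    omega
  · exact absurd (kp_lt_of_rk_lt h') (by omega)

/-- The subsemigroup associated to an element. -/
def U [NeZero n] (f : orderPreservingSemigroup n) :
    Subsemigroup (orderPreservingSemigroup n) where
  carrier := {h | rk h < rk f ∨ (sp h ∧ rk h = rk f ∧ om h ≤ om f)}
  mul_mem' := by
    rintro a b (ha | ⟨hsa, hra, -⟩) (hb | ⟨hsb, hrb, -⟩)
    · exact Or.inl (lt_of_le_of_lt (rk_mul_le_left a b) ha)
    · exact Or.inl (lt_of_le_of_lt (rk_mul_le_left a b) ha)
    · exact Or.inl (lt_of_le_of_lt (rk_mul_le_right a b) hb)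
    · exact Or.inl (hra ▸ rk_mul_lt a b hsa hsb)

lemma mem_U_self [NeZero n] (f : orderPreservingSemigroup n) (hf : sp f) : f ∈ U f :=
  Or.inr ⟨hf, rfl, le_rfl⟩

lemma U_strictMono [NeZero n] {f g : orderPreservingSemigroup n}
    (hg : sp g) (h : kp f < kp g) : U f < U g := by
  rw [SetLike.lt_iff_le_and_exists]
  constructor
  · intro x hx
    rcases kp_cases h with hr | ⟨hr, ho⟩
    · rcases hx with h1 | ⟨-, h2, -⟩
      · exact Or.inl (lt_trans h1 hr)
      · exact Or.inl (h2 ▸ hr)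
    · rcases hx with h1 | ⟨hs, h2, h3⟩
      · exact Or.inl (hr ▸ h1)
      · exact Or.inr ⟨hs, h2.trans hr, h3.trans (le_of_lt ho)⟩
  · refine ⟨g, mem_U_self g hg, ?_⟩
    rcases kp_cases h with hr | ⟨hr, ho⟩
    · rintro (h1 | ⟨-, h2, -⟩) <;> omega
    · rintro (h1 | ⟨-, -, h3⟩) <;> omega

/-- Spacing lemma for strictly monotone maps into `Fin`. -/
lemma strictMono_spacing {m k : ℕ} (e : Fin m → Fin k) (he : StrictMono e) :
    ∀ d : ℕ, ∀ i j : Fin m, j.val = i.val + d → (e i).val + d ≤ (e j).val := by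
  intro d
  induction d with
  | zero =>
    intro i j hj
    have : j = i := Fin.val_injective (by omega)
    subst this
    omega
  | succ d ih =>
    intro i j hj
    have hlt : i.val + d < m := by omega
    set j' : Fin m := ⟨i.val + d, hlt⟩ with hj'
    have h1 : (e i).val + d ≤ (e j').val := ih i j' rfl
    have h2 : e j' < e j := he (by rw [Fin.lt_def]; simp [hj']; omega)
    rw [Fin.lt_def] at h2
    omega


/-- Value (in `ℕ`) of the injection from `n`-subsets of `Fin (2n-3)`. -/
def phiVal (s : {s : Finset (Fin (2 * n - 3)) // s.card = n}) (i : Fin n) : ℕ :=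
  if i.val = 0 then (s.val.orderEmbOfFin s.property i).val + 1
  else (s.val.orderEmbOfFin s.property i).val + 2 - i.val

lemma phiFun_ge (s : {s : Finset (Fin (2 * n - 3)) // s.card = n}) (i : Fin n) :
    i.val ≤ (s.val.orderEmbOfFin s.property i).val := by
  set e := s.val.orderEmbOfFin s.property
  have h0 : (0 : ℕ) < n := i.pos
  have h1 := strictMono_spacing e e.strictMono i.val ⟨0, h0⟩ i
    (by show i.val = (0 : ℕ) + i.val; omega)
  omega

lemma phiFun_le (hn : 3 ≤ n) (s : {s : Finset (Fin (2 * n - 3)) // s.card = n})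
    (i : Fin n) : (s.val.orderEmbOfFin s.property i).val + (n - 1 - i.val) ≤ 2 * n - 4 := by
  set e := s.val.orderEmbOfFin s.property
  have hin : i.val < n := i.isLt
  have h1 := strictMono_spacing e e.strictMono (n - 1 - i.val) i ⟨n - 1, by omega⟩
    (by show n - 1 = i.val + (n - 1 - i.val); omega)
  have h2 : (e ⟨n - 1, by omega⟩).val < 2 * n - 3 := (e ⟨n - 1, by omega⟩).isLt
  omega

lemma phiVal_lt (hn : 3 ≤ n) (s : {s : Finset (Fin (2 * n - 3)) // s.card = n})
    (i : Fin n) : phiVal s i < n := by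
  have h1 := phiFun_le hn s i
  have h2 := phiFun_ge s i
  have hin : i.val < n := i.isLt
  unfold phiVal
  split <;> omega

lemma phiFun_spacing (s : {s : Finset (Fin (2 * n - 3)) // s.card = n})
    {i j : Fin n} (hij : i ≤ j) :
    (s.val.orderEmbOfFin s.property i).val + (j.val - i.val)
      ≤ (s.val.orderEmbOfFin s.property j).val := by
  set e := s.val.orderEmbOfFin s.property
  exact strictMono_spacing e e.strictMono (j.val - i.val) i j
    (by rw [Fin.le_def] at hij; omega)

/-- The underlying function of the injection. -/
def phiFun (hn : 3 ≤ n) (s : {s : Finset (Fin (2 * n - 3)) // s.card = n}) :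
    Fin n → Fin n :=
  fun i => ⟨phiVal s i, phiVal_lt hn s i⟩

lemma phiFun_monotone (hn : 3 ≤ n) (s : {s : Finset (Fin (2 * n - 3)) // s.card = n}) :
    Monotone (phiFun hn s) := by
  intro i j hij
  rw [Fin.le_def]
  show phiVal s i ≤ phiVal s j
  have hsp := phiFun_spacing (n := n) s hij
  have hgei := phiFun_ge (n := n) s i
  have hgej := phiFun_ge (n := n) s j
  have hij' : i.val ≤ j.val := hij
  unfold phiVal
  split <;> split <;> omega

/-- The injection from `n`-subsets of `Fin (2n-3)` into the semigroup. -/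
def Phi (hn : 3 ≤ n) (s : {s : Finset (Fin (2 * n - 3)) // s.card = n}) :
    orderPreservingSemigroup n :=
  ⟨phiFun hn s, phiFun_monotone hn s⟩

lemma sp_Phi [NeZero n] (hn : 3 ≤ n)
    (s : {s : Finset (Fin (2 * n - 3)) // s.card = n}) : sp (Phi hn s) := by
  have happ : ∀ x : Fin n, ((Phi hn s).val : Fin n → Fin n) x = ⟨phiVal s x, phiVal_lt hn s x⟩ :=
    fun x => rfl
  constructor
  · intro x
    apply Fin.ne_of_val_ne
    rw [happ x]
    show phiVal s x ≠ (0 : Fin n).val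
    rw [Fin.val_zero]
    have := phiFun_ge (n := n) s x
    unfold phiVal
    split <;> omega
  · intro x hx
    have hx0 : x.val ≠ 0 := fun h =>
      hx (Fin.val_injective (by rw [h, Fin.val_zero]))
    rw [Fin.lt_def, happ x, happ 0]
    show phiVal s 0 < phiVal s x
    have hle : (0 : Fin n) ≤ x := by rw [Fin.le_def, Fin.val_zero]; omega
    have h1 := phiFun_spacing (n := n) s hle
    have h2 := phiFun_ge (n := n) s x
    rw [Fin.val_zero] at h1
    unfold phiVal
    rw [if_pos (Fin.val_zero n), if_neg hx0]
    omega

lemma Phi_injective (hn : 3 ≤ n) : Function.Injective (Phi (n := n) hn) := by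
  intro s t h
  have hfun : ∀ i, phiVal s i = phiVal t i := by
    intro i
    have : phiFun hn s i = phiFun hn t i := by
      rw [show phiFun hn s = phiFun hn t from congrArg Subtype.val h]
    exact congrArg Fin.val this
  have hemb : ∀ i : Fin n, (s.val.orderEmbOfFin s.property i)
      = (t.val.orderEmbOfFin t.property i) := by
    intro i
    have hi := hfun i
    have hges := phiFun_ge (n := n) s i
    have hget := phiFun_ge (n := n) t i
    unfold phiVal at hi
    by_cases h0 : i.val = 0
    · rw [if_pos h0, if_pos h0] at hi
      exact Fin.val_injective (by omega)
    · rw [if_neg h0, if_neg h0] at hi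
      exact Fin.val_injective (by omega)
  have hrange : (s.val : Set (Fin (2 * n - 3)))
      = (t.val : Set (Fin (2 * n - 3))) := by
    have hfe : ⇑(s.val.orderEmbOfFin s.property) = ⇑(t.val.orderEmbOfFin t.property) :=
      funext hemb
    rw [← Finset.range_orderEmbOfFin s.val s.property,
      ← Finset.range_orderEmbOfFin t.val t.property, hfe]
  exact Subtype.ext (Finset.coe_injective hrange)


end OPChain

open OPChain in
/-- For every integer `n ≥ 2`, the length of the semigroup `O_n` of order-preserving
transformations of `{1,…,n}` satisfies `l(O_n) ≥ C(2n−3, n) − 1`. -/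
theorem semigroupLength_orderPreserving (n : ℕ) (hn : 2 ≤ n) :
    (2 * n - 3).choose n - 1 ≤ semigroupLength (orderPreservingSemigroup n) := by
  by_cases h3 : 3 ≤ n
  · haveI : NeZero n := ⟨by omega⟩
    set C := (2 * n - 3).choose n with hCdef
    have hCpos : 0 < C := Nat.choose_pos (by omega)
    -- the finset of weights
    have hcardsub : Fintype.card {s : Finset (Fin (2 * n - 3)) // s.card = n} = C := by
      rw [Fintype.card_finset_len, Fintype.card_fin]
    set T : Finset ℕ :=
      Finset.univ.image (fun s : {s : Finset (Fin (2 * n - 3)) // s.card = n} =>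
        kp (Phi h3 s)) with hTdef
    have hkpPhi_inj : Function.Injective
        (fun s : {s : Finset (Fin (2 * n - 3)) // s.card = n} => kp (Phi h3 s)) := by
      intro s t h
      apply Phi_injective h3
      simp only at h
      -- kp injective
      have hrk : rk (Phi h3 s) = rk (Phi h3 t) := by
        by_contra hne
        rcases Nat.lt_or_ge (rk (Phi h3 s)) (rk (Phi h3 t)) with h' | h'
        · exact absurd h (Nat.ne_of_lt (kp_lt_of_rk_lt h'))
        · have h'' : rk (Phi h3 t) < rk (Phi h3 s) := by omega
          exact absurd h.symm (Nat.ne_of_lt (kp_lt_of_rk_lt h''))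
      have hom : om (Phi h3 s) = om (Phi h3 t) := by
        unfold kp at h
        rw [hrk] at h
        omega
      exact om_inj hom
    have hTcard : T.card = C := by
      rw [hTdef, Finset.card_image_of_injective _ hkpPhi_inj, Finset.card_univ, hcardsub]
    have hTcard' : T.card = (C - 1) + 1 := by omega
    set e := T.orderEmbOfFin hTcard' with hedef
    have hex : ∀ i : Fin ((C - 1) + 1), ∃ f : orderPreservingSemigroup n,
        sp f ∧ kp f = e i := by
      intro i
      have hmem : (e i) ∈ T := Finset.orderEmbOfFin_mem T hTcard' i
      rw [hTdef, Finset.mem_image] at hmem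
      obtain ⟨s, -, hs⟩ := hmem
      exact ⟨Phi h3 s, sp_Phi h3 s, hs⟩
    choose g hg1 hg2 using hex
    -- boundedness of the defining set
    haveI : Fintype (Function.End (Fin n)) := inferInstanceAs (Fintype (Fin n → Fin n))
    have hbdd : BddAbove {k : ℕ | ∃ c : Fin (k + 1) →
        Subsemigroup (orderPreservingSemigroup n),
        StrictMono c ∧ ∀ i, ((c i : Set (orderPreservingSemigroup n))).Nonempty} := by
      refine ⟨Fintype.card (Set (Function.End (Fin n))), ?_⟩
      rintro k ⟨c, hc, -⟩
      have hinj : Function.Injective (fun i : Fin (k + 1) =>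
          (Subtype.val '' ((c i : Set (orderPreservingSemigroup n))) :
            Set (Function.End (Fin n)))) := by
        intro i j hij
        apply hc.injective
        apply SetLike.coe_injective
        exact Set.image_injective.mpr Subtype.val_injective hij
      have := Fintype.card_le_of_injective _ hinj
      rw [Fintype.card_fin] at this
      omega
    -- the chain
    have hmem : (C - 1) ∈ {k : ℕ | ∃ c : Fin (k + 1) →
        Subsemigroup (orderPreservingSemigroup n),
        StrictMono c ∧ ∀ i, ((c i : Set (orderPreservingSemigroup n))).Nonempty} := by
      refine ⟨fun i => U (g i), ?_, ?_⟩
      · intro i j hij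
        exact U_strictMono (hg1 j) (by
          rw [hg2 i, hg2 j]
          exact e.strictMono hij)
      · intro i
        exact ⟨g i, mem_U_self (g i) (hg1 i)⟩
    exact le_csSup hbdd hmem
  · -- n = 2 : the left side is 0
    have hn2 : n = 2 := by omega
    subst hn2
    have : (2 * 2 - 3).choose 2 = 0 := by decide
    rw [this]
    exact Nat.zero_le _
end

section
/- For every integer n ≥ 2, F*(n, n−1) = ⌊(n−1)/2⌋ · ⌈(n−1)/2⌉, where F*(n,k) is the largest content of a league of rank k on {1,...,n} in which every partition consists of intervals. -/
/-- A finset of `Fin n` is an interval of consecutive integers if it contains every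
element lying between two of its members. -/
def IsIntervalFinset {n : ℕ} (p : Finset (Fin n)) : Prop :=
  ∀ a b c : Fin n, a ∈ p → c ∈ p → a ≤ b → b ≤ c → b ∈ p

/-- `F*(n,k)`: the largest content `|P|·|T|` of a league `(P, T)` of rank `k` on
`{1,…,n}` in which every partition in `P` has all of its parts equal to intervals of
consecutive integers. -/
noncomputable def leagueFStar (n k : ℕ) : ℕ :=
  sSup {m : ℕ | ∃ P T, IsLeague n k P T ∧
    (∀ Q ∈ P, ∀ p ∈ Q.parts, IsIntervalFinset p) ∧ m = P.ncard * T.ncard}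


open Finset

def Dbl (n i : ℕ) (h : i + 1 < n) : Finset (Fin n) :=
  {⟨i, by omega⟩, ⟨i+1, h⟩}

lemma mem_Dbl {n i : ℕ} {h : i + 1 < n} {x : Fin n} :
    x ∈ Dbl n i h ↔ (x : ℕ) = i ∨ (x : ℕ) = i + 1 := by
  simp [Dbl, Fin.ext_iff]

lemma card_Dbl {n i : ℕ} (h : i + 1 < n) : (Dbl n i h).card = 2 := by
  rw [Dbl, card_insert_of_notMem (by simp [Fin.ext_iff]), card_singleton]

def partsOf (n i : ℕ) (h : i + 1 < n) : Finset (Finset (Fin n)) :=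
  insert (Dbl n i h) ((univ \ Dbl n i h).image fun x => {x})

lemma mem_partsOf {n i : ℕ} {h : i + 1 < n} {p : Finset (Fin n)} :
    p ∈ partsOf n i h ↔ p = Dbl n i h ∨ ∃ x, x ∉ Dbl n i h ∧ p = {x} := by
  simp only [partsOf, mem_insert, mem_image, mem_sdiff, mem_univ, true_and]
  constructor
  · rintro (h | ⟨x, hx, rfl⟩)
    · exact Or.inl h
    · exact Or.inr ⟨x, hx, rfl⟩
  · rintro (h | ⟨x, hx, rfl⟩)
    · exact Or.inl h
    · exact Or.inr ⟨x, hx, rfl⟩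

lemma card_partsOf {n i : ℕ} (h : i + 1 < n) : (partsOf n i h).card = n - 1 := by
  rw [partsOf, card_insert_of_notMem, card_image_of_injective _ (fun a b hab => by
    simpa using hab)]
  · rw [card_sdiff_of_subset (subset_univ _), card_univ, Fintype.card_fin, card_Dbl]
    omega
  · intro hmem
    obtain ⟨x, _, hx⟩ := mem_image.1 hmem
    have := card_Dbl h
    rw [← hx] at this
    simp at this

def mkPart (n i : ℕ) (h : i + 1 < n) : Finpartition (univ : Finset (Fin n)) where
  parts := partsOf n i h
  supIndep := by
    rw [Finset.supIndep_iff_pairwiseDisjoint]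
    intro p hp q hq hpq
    rw [Finset.mem_coe, mem_partsOf] at hp hq
    simp only [Function.onFun, id]
    rw [Finset.disjoint_left]
    rcases hp with rfl | ⟨x, hx, rfl⟩ <;> rcases hq with rfl | ⟨y, hy, rfl⟩
    · exact absurd rfl hpq
    · intro z hz hz'
      rw [mem_singleton] at hz'
      exact hy (hz' ▸ hz)
    · intro z hz hz'
      rw [mem_singleton] at hz
      exact hx (hz ▸ hz')
    · intro z hz hz'
      rw [mem_singleton] at hz hz'
      subst hz; subst hz'; exact absurd rfl hpq
  sup_parts := by
    rw [partsOf, sup_insert, sup_image]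
    have h2 : ((univ \ Dbl n i h).sup ((id : Finset (Fin n) → Finset (Fin n)) ∘ fun x => {x}))
        = univ \ Dbl n i h := Finset.sup_singleton_eq_self _
    rw [h2]
    show (Dbl n i h) ⊔ _ = _
    rw [sup_eq_union]
    exact Finset.union_sdiff_of_subset (subset_univ _)
  bot_notMem := by
    rw [Finset.bot_eq_empty, mem_partsOf]
    rintro (h' | ⟨x, _, h'⟩)
    · have := card_Dbl h; rw [← h'] at this; simp at this
    · exact (singleton_ne_empty x) h'.symm

lemma parts_mkPart {n i : ℕ} (h : i + 1 < n) : (mkPart n i h).parts = partsOf n i h := rfl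

lemma intervals_mkPart {n i : ℕ} (h : i + 1 < n) :
    ∀ p ∈ (mkPart n i h).parts, IsIntervalFinset p := by
  intro p hp
  rw [parts_mkPart, mem_partsOf] at hp
  rcases hp with rfl | ⟨x, _, rfl⟩
  · intro a b c ha hc hab hbc
    rw [mem_Dbl] at ha hc ⊢
    rw [Fin.le_def] at hab hbc
    omega
  · intro a b c ha hc hab hbc
    rw [mem_singleton] at ha hc ⊢
    subst ha; subst hc
    exact le_antisymm hbc hab

lemma transversal_mkPart {n i : ℕ} (h : i + 1 < n) (j : Fin n) :
    IsTransversal (univ \ {j}) (mkPart n i h) ↔ ((j : ℕ) = i ∨ (j : ℕ) = i + 1) := by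
  have hinter : ∀ p : Finset (Fin n), (univ \ {j}) ∩ p = p \ {j} := by
    intro p; ext x; simp [and_comm]
  constructor
  · intro ht
    by_contra hj
    rw [not_or] at hj
    have hjD : j ∉ Dbl n i h := by rw [mem_Dbl]; tauto
    have hmem : ({j} : Finset (Fin n)) ∈ (mkPart n i h).parts := by
      rw [parts_mkPart, mem_partsOf]; exact Or.inr ⟨j, hjD, rfl⟩
    have := ht _ hmem
    rw [hinter] at this
    simp at this
  · intro hj p hp
    rw [hinter]
    have hjD : j ∈ Dbl n i h := by rw [mem_Dbl]; tauto
    rw [parts_mkPart, mem_partsOf] at hp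
    rcases hp with rfl | ⟨x, hx, rfl⟩
    · rw [card_sdiff_of_subset (by simpa using hjD), card_Dbl, card_singleton]
    · rw [sdiff_singleton_eq_erase, Finset.erase_eq_of_notMem, card_singleton]
      rw [mem_singleton]
      rintro rfl; exact hx hjD

lemma mkPart_inj {n i i' : ℕ} {h : i + 1 < n} {h' : i' + 1 < n}
    (he : mkPart n i h = mkPart n i' h') : i = i' := by
  have hp : Dbl n i h ∈ partsOf n i' h' := by
    rw [← parts_mkPart, ← he, parts_mkPart]
    rw [mem_partsOf]; exact Or.inl rfl
  rw [mem_partsOf] at hp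
  rcases hp with heq | ⟨x, _, heq⟩
  · have h1 : (⟨i, by omega⟩ : Fin n) ∈ Dbl n i h := by rw [mem_Dbl]; simp
    have h2 : (⟨i+1, h⟩ : Fin n) ∈ Dbl n i h := by rw [mem_Dbl]; simp
    rw [heq, mem_Dbl] at h1 h2
    simp only [] at h1 h2
    omega
  · have := card_Dbl h
    rw [heq, card_singleton] at this
    omega
lemma classify {n : ℕ} (hn : 2 ≤ n) (Q : Finpartition (univ : Finset (Fin n)))
    (hc : Q.parts.card = n - 1) (hiv : ∀ p ∈ Q.parts, IsIntervalFinset p) :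
    ∃ i, ∃ h : i + 1 < n, Q = mkPart n i h := by
  have h1 : ∀ p ∈ Q.parts, 1 ≤ p.card := fun p hp => (Q.nonempty_of_mem_parts hp).card_pos
  have hsum : ∑ p ∈ Q.parts, p.card = n := by
    rw [Q.sum_card_parts, card_univ, Fintype.card_fin]
  have hle : ∀ t : Finset (Finset (Fin n)), t ⊆ Q.parts → t.card ≤ ∑ p ∈ t, p.card := by
    intro t ht
    calc t.card = ∑ _p ∈ t, 1 := by rw [Finset.sum_const, smul_eq_mul, mul_one]
    _ ≤ ∑ p ∈ t, p.card := Finset.sum_le_sum (fun p hp => h1 p (ht hp))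
  have hex : ∃ p₀ ∈ Q.parts, 2 ≤ p₀.card := by
    by_contra hno
    push_neg at hno
    have : ∑ p ∈ Q.parts, p.card ≤ ∑ _p ∈ Q.parts, 1 :=
      Finset.sum_le_sum (fun p hp => by have := hno p hp; omega)
    rw [hsum, Finset.sum_const, smul_eq_mul, mul_one, hc] at this
    omega
  obtain ⟨p₀, hp₀, hp₀2⟩ := hex
  have hsplit : p₀.card + ∑ p ∈ Q.parts.erase p₀, p.card = n := by
    rw [Finset.add_sum_erase _ _ hp₀, hsum]
  have herase := hle _ (Finset.erase_subset p₀ Q.parts)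
  rw [Finset.card_erase_of_mem hp₀, hc] at herase
  have hcard2 : p₀.card = 2 := by omega
  have hone : ∀ p ∈ Q.parts, p ≠ p₀ → p.card = 1 := by
    intro p hp hne
    by_contra hpc
    have hp2 : 2 ≤ p.card := by have := h1 p hp; omega
    have hmem : p ∈ Q.parts.erase p₀ := Finset.mem_erase.2 ⟨hne, hp⟩
    have hadd : p.card + ∑ q ∈ (Q.parts.erase p₀).erase p, q.card
        = ∑ q ∈ Q.parts.erase p₀, q.card := Finset.add_sum_erase _ _ hmem
    have h3 := hle _ (((Q.parts.erase p₀).erase_subset p).trans (Q.parts.erase_subset p₀))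
    rw [Finset.card_erase_of_mem hmem, Finset.card_erase_of_mem hp₀, hc] at h3
    omega
  have key : ∀ x y : Fin n, x < y → p₀ = {x, y} → ∃ i, ∃ h : i + 1 < n, p₀ = Dbl n i h := by
    intro x y hlt heq
    have hvlt : (x : ℕ) < (y : ℕ) := hlt
    have hylt := y.isLt
    have hx1 : (x : ℕ) + 1 < n := by omega
    refine ⟨(x : ℕ), hx1, ?_⟩
    have hyx : (y : ℕ) = (x : ℕ) + 1 := by
      by_contra hne
      have hz : (⟨(x : ℕ) + 1, hx1⟩ : Fin n) ∈ p₀ := by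
        apply hiv p₀ hp₀ x _ y
        · rw [heq]; exact mem_insert_self _ _
        · rw [heq]; exact mem_insert_of_mem (mem_singleton_self _)
        · rw [Fin.le_def]; simp
        · rw [Fin.le_def]; simp; omega
      rw [heq, mem_insert, mem_singleton, Fin.ext_iff, Fin.ext_iff] at hz
      simp only [] at hz
      omega
    rw [heq]
    ext z
    rw [mem_Dbl, mem_insert, mem_singleton, Fin.ext_iff, Fin.ext_iff]
    omega
  obtain ⟨x, y, hxy, hxyeq⟩ := Finset.card_eq_two.1 hcard2
  have hDex : ∃ i, ∃ h : i + 1 < n, p₀ = Dbl n i h := by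
    rcases lt_or_gt_of_ne hxy with hlt | hgt
    · exact key x y hlt hxyeq
    · exact key y x hgt (hxyeq.trans (Finset.pair_comm x y))
  obtain ⟨i, h, hD⟩ := hDex
  refine ⟨i, h, Finpartition.ext ?_⟩
  rw [parts_mkPart]
  apply Finset.eq_of_subset_of_card_le
  · intro p hp
    rw [mem_partsOf]
    by_cases hpe : p = p₀
    · exact Or.inl (hpe.trans hD)
    · obtain ⟨x', hx'⟩ := Finset.card_eq_one.1 (hone p hp hpe)
      refine Or.inr ⟨x', ?_, hx'⟩
      intro hxD
      rw [← hD] at hxD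
      have hxp : x' ∈ p := hx' ▸ mem_singleton_self x'
      exact hpe (Q.eq_of_mem_parts hp hp₀ hxp hxD)
  · rw [card_partsOf, hc]

lemma exists_compl {n : ℕ} {A : Finset (Fin n)} (hA : A.card = n - 1) (hn : 2 ≤ n) :
    ∃ j : Fin n, A = univ \ {j} := by
  have h1 : (univ \ A).card = 1 := by
    rw [card_sdiff_of_subset (subset_univ _), card_univ, Fintype.card_fin, hA]; omega
  obtain ⟨j, hj⟩ := Finset.card_eq_one.1 h1
  exact ⟨j, by rw [← hj, Finset.sdiff_sdiff_self_left, Finset.univ_inter]⟩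
lemma prod_bound (a m : ℕ) (h : a ≤ m) : a * (m - a) ≤ m / 2 * ((m + 1) / 2) := by
  obtain ⟨c, rfl⟩ : ∃ c, m = a + c := ⟨m - a, by omega⟩
  have h2 : a + c - a = c := by omega
  rw [h2]
  rcases Nat.even_or_odd (a + c) with ⟨q, hq⟩ | ⟨q, hq⟩
  · have h3 : (a + c) / 2 = q := by omega
    have h4 : (a + c + 1) / 2 = q := by omega
    rw [h3, h4]
    have hq' : (a : ℤ) + c = q + q := by exact_mod_cast hq
    have : (a : ℤ) * c ≤ q * q := by nlinarith [sq_nonneg ((a : ℤ) - c)]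
    exact_mod_cast this
  · have h3 : (a + c) / 2 = q := by omega
    have h4 : (a + c + 1) / 2 = q + 1 := by omega
    rw [h3, h4]
    have hac : a ≠ c := by omega
    have hq' : (a : ℤ) + c = 2 * q + 1 := by exact_mod_cast hq
    have h0 : (a : ℤ) ≠ c := by exact_mod_cast hac
    have h5 : 1 ≤ ((a : ℤ) - c) ^ 2 := by
      rcases lt_or_gt_of_ne h0 with hlt | hgt <;> nlinarith
    have : (a : ℤ) * c ≤ q * (q + 1) := by nlinarith
    exact_mod_cast this

lemma combo {n : ℕ} (I J : Finset ℕ) (hI : I ⊆ Finset.range (n - 1))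
    (hJ : J ⊆ Finset.range n)
    (hd : ∀ i ∈ I, ∀ j ∈ J, j ≠ i ∧ j ≠ i + 1) :
    I.card * J.card ≤ (n - 1) / 2 * (n / 2) := by
  rcases I.eq_empty_or_nonempty with rfl | hne
  · simp
  obtain ⟨M, hM⟩ := hne.exists_mem
  have hMmax : ∀ i ∈ I, i ≤ I.max' ⟨M, hM⟩ := fun i hi => I.le_max' i hi
  set Mx := I.max' ⟨M, hM⟩ with hMx
  have hMxI : Mx ∈ I := I.max'_mem _
  have hMxlt : Mx < n - 1 := by have := hI hMxI; rw [Finset.mem_range] at this; exact this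
  have hn2 : 2 ≤ n := by omega
  set K := insert (Mx + 1) I with hK
  have hnotmem : Mx + 1 ∉ I := fun hmem => by have := hMmax _ hmem; omega
  have hKcard : K.card = I.card + 1 := Finset.card_insert_of_notMem hnotmem
  have hKsub : K ⊆ Finset.range n := by
    intro x hx
    rw [hK, Finset.mem_insert] at hx
    rw [Finset.mem_range]
    rcases hx with rfl | hx
    · omega
    · have := hI hx; rw [Finset.mem_range] at this; omega
  have hJsub : J ⊆ Finset.range n \ K := by
    intro j hj
    rw [Finset.mem_sdiff]
    refine ⟨hJ hj, ?_⟩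
    rw [hK, Finset.mem_insert]
    rintro (rfl | hjI)
    · exact (hd Mx hMxI _ hj).2 rfl
    · exact (hd j hjI j hj).1 rfl
  have hJcard : J.card ≤ n - (I.card + 1) := by
    calc J.card ≤ (Finset.range n \ K).card := Finset.card_le_card hJsub
    _ = n - K.card := by rw [Finset.card_sdiff_of_subset hKsub, Finset.card_range]
    _ = n - (I.card + 1) := by rw [hKcard]
  have hIcard : I.card + 1 ≤ n := by
    calc I.card + 1 = K.card := hKcard.symm
    _ ≤ n := by have := Finset.card_le_card hKsub; rwa [Finset.card_range] at this
  calc I.card * J.card ≤ I.card * ((n - 1) - I.card) := by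
        apply Nat.mul_le_mul_left
        omega
  _ ≤ (n - 1) / 2 * ((n - 1 + 1) / 2) := prod_bound _ _ (by omega)
  _ = (n - 1) / 2 * (n / 2) := by congr 1; omega
lemma mkPart_congr {n i i' : ℕ} (h : i + 1 < n) (h' : i' + 1 < n) (e : i = i') :
    mkPart n i h = mkPart n i' h' := by subst e; rfl

open scoped Classical in
lemma upper {n : ℕ} (hn : 2 ≤ n) {P : Set (Finpartition (univ : Finset (Fin n)))}
    {T : Set (Finset (Fin n))} (hL : IsLeague n (n - 1) P T)
    (hiv : ∀ Q ∈ P, ∀ p ∈ Q.parts, IsIntervalFinset p) :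
    P.ncard * T.ncard ≤ (n - 1) / 2 * (n / 2) := by
  obtain ⟨hP, hT, hPT⟩ := hL
  set I : Finset ℕ := (Finset.range (n - 1)).filter
    (fun i => ∃ h : i + 1 < n, mkPart n i h ∈ P) with hI
  set J : Finset ℕ := (Finset.range n).filter
    (fun j => ∃ h : j < n, (univ \ {(⟨j, h⟩ : Fin n)}) ∈ T) with hJ
  set F : Finpartition (univ : Finset (Fin n)) → ℕ :=
    fun Q => sInf {i | ∃ h : i + 1 < n, Q = mkPart n i h} with hF
  have hFmem : ∀ Q ∈ P, ∃ h : F Q + 1 < n, Q = mkPart n (F Q) h := by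
    intro Q hQ
    obtain ⟨i, h, hQi⟩ := classify hn Q (hP Q hQ) (hiv Q hQ)
    have hne : {i | ∃ h : i + 1 < n, Q = mkPart n i h}.Nonempty := ⟨i, h, hQi⟩
    exact Nat.sInf_mem hne
  have hPcard : P.ncard ≤ I.card := by
    rw [← Set.ncard_coe_finset]
    apply Set.ncard_le_ncard_of_injOn F
    · intro Q hQ
      obtain ⟨h, hQi⟩ := hFmem Q hQ
      simp only [hI, Finset.coe_filter, Set.mem_setOf_eq, Finset.mem_range]
      exact ⟨by omega, h, hQi ▸ hQ⟩
    · intro Q hQ Q' hQ' hFQ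
      obtain ⟨h, hQi⟩ := hFmem Q hQ
      obtain ⟨h', hQi'⟩ := hFmem Q' hQ'
      rw [hQi, hQi']
      exact mkPart_congr _ _ hFQ
  set G : Finset (Fin n) → ℕ :=
    fun A => sInf {j | ∃ h : j < n, A = univ \ {(⟨j, h⟩ : Fin n)}} with hG
  have hGmem : ∀ A ∈ T, ∃ h : G A < n, A = univ \ {(⟨G A, h⟩ : Fin n)} := by
    intro A hA
    obtain ⟨j, hj⟩ := exists_compl (hT A hA) hn
    have hne : {j | ∃ h : j < n, A = univ \ {(⟨j, h⟩ : Fin n)}}.Nonempty :=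
      ⟨(j : ℕ), j.isLt, by rwa [Fin.eta]⟩
    exact Nat.sInf_mem hne
  have hTcard : T.ncard ≤ J.card := by
    rw [← Set.ncard_coe_finset]
    apply Set.ncard_le_ncard_of_injOn G
    · intro A hA
      obtain ⟨h, hAj⟩ := hGmem A hA
      simp only [hJ, Finset.coe_filter, Set.mem_setOf_eq, Finset.mem_range]
      exact ⟨h, h, hAj ▸ hA⟩
    · intro A hA A' hA' hGA
      obtain ⟨h, hAj⟩ := hGmem A hA
      obtain ⟨h', hAj'⟩ := hGmem A' hA'
      have hfin : (⟨G A, h⟩ : Fin n) = (⟨G A', h'⟩ : Fin n) := Fin.ext hGA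
      rw [hAj, hAj', hfin]
  have hcons : ∀ i ∈ I, ∀ j ∈ J, j ≠ i ∧ j ≠ i + 1 := by
    intro i hi j hj
    rw [hI, Finset.mem_filter] at hi
    rw [hJ, Finset.mem_filter] at hj
    obtain ⟨_, hin, hiP⟩ := hi
    obtain ⟨_, hjn, hjT⟩ := hj
    have := hPT _ hiP _ hjT
    rw [transversal_mkPart] at this
    simp only [Fin.val_mk] at this
    push_neg at this
    exact this
  calc P.ncard * T.ncard ≤ I.card * J.card := Nat.mul_le_mul hPcard hTcard
  _ ≤ (n - 1) / 2 * (n / 2) :=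
      combo I J (Finset.filter_subset _ _) (Finset.filter_subset _ _) hcons

lemma lower {n : ℕ} (hn : 2 ≤ n) :
    ∃ (P : Set (Finpartition (univ : Finset (Fin n)))) (T : Set (Finset (Fin n))),
      IsLeague n (n - 1) P T ∧ (∀ Q ∈ P, ∀ p ∈ Q.parts, IsIntervalFinset p) ∧
      (n - 1) / 2 * (n / 2) = P.ncard * T.ncard := by
  set a := (n - 1) / 2 with ha
  have ha' : ∀ i, i < a → i + 1 < n := by intro i hi; omega
  have h01 : 0 + 1 < n := by omega
  set f : ℕ → Finpartition (univ : Finset (Fin n)) := fun i =>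
    if h : i + 1 < n then mkPart n i h else mkPart n 0 h01 with hf
  set g : ℕ → Finset (Fin n) := fun j =>
    if h : j < n then univ \ {(⟨j, h⟩ : Fin n)} else ∅ with hg
  have hginj : Set.InjOn g (Set.Ico (a + 1) n) := by
    intro x hx y hy hxy
    simp only [Set.mem_Ico] at hx hy
    rw [hg] at hxy
    simp only [dif_pos hx.2, dif_pos hy.2] at hxy
    have h2 := congrArg (fun s => univ \ s) hxy
    simp only [Finset.sdiff_sdiff_self_left, Finset.univ_inter] at h2
    have := Finset.singleton_injective h2
    exact Fin.mk.injEq .. ▸ (by injection this)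
  have hfinj : Set.InjOn f (Set.Iio a) := by
    intro x hx y hy hxy
    simp only [Set.mem_Iio] at hx hy
    rw [hf] at hxy
    simp only [dif_pos (ha' x hx), dif_pos (ha' y hy)] at hxy
    exact mkPart_inj hxy
  refine ⟨f '' Set.Iio a, g '' Set.Ico (a + 1) n, ⟨?_, ?_, ?_⟩, ?_, ?_⟩
  · rintro Q ⟨i, hi, rfl⟩
    simp only [Set.mem_Iio] at hi
    simp only [hf, dif_pos (ha' i hi)]
    rw [parts_mkPart, card_partsOf]
  · rintro A ⟨j, hj, rfl⟩
    simp only [Set.mem_Ico] at hj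
    simp only [hg, dif_pos hj.2]
    rw [card_sdiff_of_subset (subset_univ _), card_univ, Fintype.card_fin, card_singleton]
  · rintro Q ⟨i, hi, rfl⟩ A ⟨j, hj, rfl⟩
    simp only [Set.mem_Iio] at hi
    simp only [Set.mem_Ico] at hj
    simp only [hf, hg, dif_pos (ha' i hi), dif_pos hj.2]
    rw [transversal_mkPart]
    simp only [Fin.val_mk]
    push_neg
    omega
  · rintro Q ⟨i, hi, rfl⟩
    simp only [Set.mem_Iio] at hi
    simp only [hf, dif_pos (ha' i hi)]
    exact intervals_mkPart (ha' i hi)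
  · rw [Set.ncard_image_of_injOn hfinj, Set.ncard_image_of_injOn hginj,
      ← Finset.coe_range, ← Finset.coe_Ico, Set.ncard_coe_finset, Set.ncard_coe_finset,
      Finset.card_range, Nat.card_Ico]
    congr 1
    omega

/-- For every integer `n ≥ 2`, `F*(n, n−1) = ⌊(n−1)/2⌋ · ⌈(n−1)/2⌉`.
(Here `⌊(n−1)/2⌋ = (n−1)/2` and `⌈(n−1)/2⌉ = n/2` in natural-number division.) -/
theorem leagueFStar_top (n : ℕ) (hn : 2 ≤ n) :
    leagueFStar n (n - 1) = ((n - 1) / 2) * (n / 2) := by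
  have hub : ∀ m ∈ {m : ℕ | ∃ P T, IsLeague n (n - 1) P T ∧
      (∀ Q ∈ P, ∀ p ∈ Q.parts, IsIntervalFinset p) ∧ m = P.ncard * T.ncard},
      m ≤ (n - 1) / 2 * (n / 2) := by
    rintro m ⟨P, T, hL, hiv, rfl⟩
    exact upper hn hL hiv
  have hmem : (n - 1) / 2 * (n / 2) ∈ {m : ℕ | ∃ P T, IsLeague n (n - 1) P T ∧
      (∀ Q ∈ P, ∀ p ∈ Q.parts, IsIntervalFinset p) ∧ m = P.ncard * T.ncard} := by
    obtain ⟨P, T, hL, hiv, he⟩ := lower hn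
    exact ⟨P, T, hL, hiv, he⟩
  rw [leagueFStar]
  exact le_antisymm (csSup_le ⟨_, hmem⟩ hub) (le_csSup ⟨_, fun m hm => hub m hm⟩ hmem)
end

section
/- Let q be a prime power and let GLS(n,q) denote the multiplicative semigroup of all n×n matrices over the finite field with q elements. Then liminf_{n→∞} l(GLS(n,q)) / q^{n^2 − n} ≥ (1 − c(q)) · (1 − 1/q)^2, where c(q) = ∏_{k=1}^∞ (1 − q^{−k}). -/
set_option linter.unusedSectionVars false
set_option maxHeartbeats 1000000

open Filter

open LinearMap Submodule Set Matrix

section ConsCount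
variable {K V : Type*} [DivisionRing K] [AddCommGroup V] [Module K V]
variable [Fintype K] [Finite V]

local notation "q" => Fintype.card K
local notation "nn" => Module.finrank K V

/-- snoc version of `equiv_linearIndependent`, relative to a fixed first vector. -/
def equivConsLinearIndependent (e : V) (k : ℕ) :
    { s : Fin (k + 1) → V // LinearIndependent K (Fin.cons e s) } ≃
      Σ s : { s : Fin k → V // LinearIndependent K (Fin.cons e s) },
        ((Submodule.span K (Set.range (Fin.cons e (s : Fin k → V) : Fin (k+1) → V)))ᶜ : Set V) where
  toFun s := by
    refine ⟨⟨Fin.init s.1, ?_⟩, ⟨s.1 (Fin.last k), ?_⟩⟩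
    · have h : Fin.cons e s.1 = (Fin.snoc (Fin.cons e (Fin.init s.1) : Fin (k+1) → V) (s.1 (Fin.last k)) : Fin (k+1+1) → V) := by
        rw [← Fin.cons_snoc_eq_snoc_cons, Fin.snoc_init_self]
      have := s.2
      rw [h, linearIndependent_fin_snoc] at this
      exact this.1
    · have h : Fin.cons e s.1 = (Fin.snoc (Fin.cons e (Fin.init s.1) : Fin (k+1) → V) (s.1 (Fin.last k)) : Fin (k+1+1) → V) := by
        rw [← Fin.cons_snoc_eq_snoc_cons, Fin.snoc_init_self]
      have := s.2
      rw [h, linearIndependent_fin_snoc] at this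
      exact this.2
  invFun x := ⟨Fin.snoc x.1.1 x.2.1, by
    rw [Fin.cons_snoc_eq_snoc_cons, linearIndependent_fin_snoc]
    exact ⟨x.1.2, x.2.2⟩⟩
  left_inv s := by
    ext
    simp [Fin.snoc_init_self]
  right_inv x := by
    rcases x with ⟨⟨s, hs⟩, ⟨v, hv⟩⟩
    have h1 : Fin.init ((Fin.snoc s v : Fin (k+1) → V)) = s := Fin.init_snoc _ _
    refine Sigma.ext (Subtype.ext h1) ?_
    refine (Subtype.heq_iff_coe_eq ?_).mpr ?_
    · intro x
      simp only [h1]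
    · simp only [Fin.snoc_last]

attribute [local instance] Fintype.ofFinite in
open Fintype in
theorem card_linearIndependent_cons (e : V) (he : e ≠ 0) {k : ℕ} (hk : k + 1 ≤ nn) :
    Nat.card { s : Fin k → V // LinearIndependent K (Fin.cons e s) } =
      ∏ i : Fin k, (q ^ nn - q ^ (i.val + 1)) := by
  rw [Nat.card_eq_fintype_card]
  induction k with
  | zero =>
      have huniq : ∀ s : Fin 0 → V, LinearIndependent K (Fin.cons e s) := by
        intro s
        rw [linearIndependent_fin_cons]
        refine ⟨linearIndependent_empty_type, ?_⟩
        have : Set.range s = (∅ : Set V) := Set.range_eq_empty s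
        rw [this, Submodule.span_empty, Submodule.mem_bot]
        exact he
      have : Fintype.card { s : Fin 0 → V // LinearIndependent K (Fin.cons e s) } = 1 := by
        rw [Fintype.card_eq_one_iff]
        exact ⟨⟨default, huniq default⟩, fun y => Subtype.ext (Subsingleton.elim _ _)⟩
      rw [this]; simp
  | succ k ih =>
      have hfib (s : { s : Fin k → V // LinearIndependent K (Fin.cons e s) }) :
          card ((Submodule.span K (Set.range (Fin.cons e (s : Fin k → V) : Fin (k+1) → V)))ᶜ : Set V)
            = q ^ nn - q ^ (k + 1) := by
        rw [card_compl_set, Module.card_eq_pow_finrank (K := K)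
          (V := ((Submodule.span K (Set.range (Fin.cons e (s : Fin k → V) : Fin (k+1) → V))) : Set V))]
        simp only [SetLike.coe_sort_coe, finrank_span_eq_card s.2, card_fin]
        rw [Module.card_eq_pow_finrank (K := K) (V := V)]
      rw [card_congr (equivConsLinearIndependent e k), Fintype.card_sigma]
      rw [Finset.sum_congr rfl (fun s _ => hfib s), Finset.sum_const, Finset.card_univ]
      rw [ih (by omega), Fin.prod_univ_castSucc]
      simp [mul_comm]
end ConsCount


section MatrixPart
variable {F : Type} [Field F] [Fintype F] {m : ℕ}

local notation "VV" => (Fin (m+2) → F)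
local notation "e₀" => (Pi.single (0 : Fin (m+2)) (1 : F) : Fin (m+2) → F)
local notation "L" => (Submodule.span F {(Pi.single (0 : Fin (m+2)) (1 : F) : Fin (m+2) → F)})

lemma e0_ne_zero : (e₀ : VV) ≠ 0 := by
  intro h
  have := congrFun h 0
  simp at this

lemma mulVec_eq_sum_cols (A : Matrix (Fin (m+2)) (Fin (m+2)) F) (x : VV) :
    A.mulVec x = ∑ j : Fin (m+2), x j • (fun i => A i j) := by
  funext i
  simp [Matrix.mulVec, dotProduct, Finset.sum_apply, mul_comm]

/-- matrix with given columns -/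
def colMat (c : Fin (m+2) → VV) : Matrix (Fin (m+2)) (Fin (m+2)) F :=
  (Matrix.of c)ᵀ

lemma colMat_col (c : Fin (m+2) → VV) (j : Fin (m+2)) :
    (fun i => colMat c i j) = c j := rfl

lemma colMat_transpose (c : Fin (m+2) → VV) : (colMat c)ᵀ = Matrix.of c := rfl

lemma colMat_of_cols (A : Matrix (Fin (m+2)) (Fin (m+2)) F) :
    colMat (fun j i => A i j) = A := by
  ext i j; rfl

lemma range_colMat (c : Fin (m+2) → VV) :
    LinearMap.range (colMat c).mulVecLin = Submodule.span F (Set.range c) := by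
  rw [Matrix.range_mulVecLin]
  rfl

lemma ker_colMat_cons_eq_iff (s : Fin (m+1) → VV) :
    LinearMap.ker (colMat (Fin.cons 0 s)).mulVecLin = L ↔ LinearIndependent F s := by
  constructor
  · intro hker
    rw [Fintype.linearIndependent_iff]
    intro g hg
    have hx : (Fin.cons (0:F) g : Fin (m+2) → F) ∈ LinearMap.ker (colMat (Fin.cons 0 s)).mulVecLin := by
      rw [LinearMap.mem_ker]
      show (colMat (Fin.cons 0 s)).mulVec _ = 0
      rw [mulVec_eq_sum_cols]
      rw [Fin.sum_univ_succ]
      simpa [colMat_col] using hg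
    rw [hker, Submodule.mem_span_singleton] at hx
    obtain ⟨a, ha⟩ := hx
    intro i
    have := congrFun ha i.succ
    simp only [Fin.cons_succ] at this
    rw [← this]
    simp [Pi.single_apply, Fin.succ_ne_zero]
  · intro hs
    apply le_antisymm
    · intro x hx
      rw [LinearMap.mem_ker] at hx
      have hx' : (colMat (Fin.cons 0 s)).mulVec x = 0 := hx
      rw [mulVec_eq_sum_cols, Fin.sum_univ_succ] at hx'
      simp only [colMat_col, Fin.cons_zero, smul_zero, zero_add, Fin.cons_succ] at hx'
      have hz : ∀ i : Fin (m+1), x i.succ = 0 :=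
        Fintype.linearIndependent_iff.mp hs _ hx'
      rw [Submodule.mem_span_singleton]
      refine ⟨x 0, ?_⟩
      funext i
      refine Fin.cases ?_ ?_ i
      · simp
      · intro j; simp [hz j, Pi.single_apply, Fin.succ_ne_zero]
    · rw [Submodule.span_singleton_le_iff_mem, LinearMap.mem_ker]
      show (colMat (Fin.cons 0 s)).mulVec _ = 0
      rw [mulVec_eq_sum_cols]
      rw [Fin.sum_univ_succ]
      simp only [colMat_col]
      simp [Pi.single_apply, Fin.succ_ne_zero]

lemma mulVec_e0 (A : Matrix (Fin (m+2)) (Fin (m+2)) F) :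
    A.mulVec e₀ = fun i => A i 0 := by
  rw [mulVec_eq_sum_cols, Fin.sum_univ_succ]
  simp [Pi.single_apply, Fin.succ_ne_zero]

lemma finrank_V : Module.finrank F VV = m + 2 := by
  rw [Module.finrank_fintype_fun_eq_card, Fintype.card_fin]

lemma rank_of_mem_T (A : Matrix (Fin (m+2)) (Fin (m+2)) F)
    (h1 : LinearMap.ker A.mulVecLin = L) : A.rank = m + 1 := by
  have hrn := LinearMap.finrank_range_add_finrank_ker A.mulVecLin
  have hker : Module.finrank F (LinearMap.ker A.mulVecLin) = 1 := by
    rw [h1]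
    exact finrank_span_singleton e0_ne_zero
  have hdef : A.rank = Module.finrank F (LinearMap.range A.mulVecLin) := rfl
  rw [finrank_V, hker] at hrn
  omega

lemma rank_mul_of_mem_T (A B : Matrix (Fin (m+2)) (Fin (m+2)) F)
    (hA1 : LinearMap.ker A.mulVecLin = L) (hB1 : LinearMap.ker B.mulVecLin = L)
    (hB2 : L ≤ LinearMap.range B.mulVecLin) : (A * B).rank ≤ m := by
  have he0 : (e₀ : VV) ∈ L := Submodule.mem_span_singleton_self _
  obtain ⟨y, hy⟩ : ∃ y, B.mulVecLin y = e₀ := hB2 he0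
  have hlt : L < LinearMap.ker (A * B).mulVecLin := by
    rw [Matrix.mulVecLin_mul]
    rw [SetLike.lt_iff_le_and_exists]
    constructor
    · intro x hx
      rw [Submodule.mem_span_singleton] at hx
      obtain ⟨a, rfl⟩ := hx
      rw [LinearMap.mem_ker, LinearMap.comp_apply, _root_.map_smul, _root_.map_smul]
      have : B.mulVecLin e₀ = 0 := by rw [← LinearMap.mem_ker, hB1]; exact he0
      rw [this]
      simp
    · refine ⟨y, ?_, ?_⟩
      · rw [LinearMap.mem_ker, LinearMap.comp_apply, hy]
        rw [← LinearMap.mem_ker, hA1]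
        exact he0
      · intro hmem
        rw [← hB1, LinearMap.mem_ker, hy] at hmem
        exact e0_ne_zero hmem
  have h2 : 2 ≤ Module.finrank F (LinearMap.ker (A * B).mulVecLin) := by
    have := Submodule.finrank_lt_finrank_of_lt hlt
    rw [finrank_span_singleton e0_ne_zero] at this
    omega
  have hrn := LinearMap.finrank_range_add_finrank_ker (A * B).mulVecLin
  have hdef : (A * B).rank = Module.finrank F (LinearMap.range (A * B).mulVecLin) := rfl
  rw [finrank_V] at hrn
  omega

lemma span_range_cons_zero (s : Fin (m+1) → VV) :
    Submodule.span F (Set.range (Fin.cons (0:VV) s : Fin (m+2) → VV)) =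
      Submodule.span F (Set.range s) := by
  rw [Fin.range_cons, Submodule.span_insert_zero]

/-- the key equivalence between the zero-set `T` and linearly independent tuples whose
span contains `e₀` -/
noncomputable def TEquiv :
    {A : Matrix (Fin (m+2)) (Fin (m+2)) F //
        LinearMap.ker A.mulVecLin = L ∧ L ≤ LinearMap.range A.mulVecLin} ≃
      {s : Fin (m+1) → VV // LinearIndependent F s ∧
        (e₀ : VV) ∈ Submodule.span F (Set.range s)} := by
  have key : ∀ A : Matrix (Fin (m+2)) (Fin (m+2)) F, LinearMap.ker A.mulVecLin = L →
      A = colMat (Fin.cons 0 (fun j i => A i j.succ)) := by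
    intro A h1
    have hcol0 : ∀ i, A i 0 = 0 := by
      have he0k : (e₀ : VV) ∈ LinearMap.ker A.mulVecLin := by
        rw [h1]; exact Submodule.mem_span_singleton_self _
      rw [LinearMap.mem_ker] at he0k
      have : A.mulVec e₀ = 0 := he0k
      rw [mulVec_e0] at this
      intro i; exact congrFun this i
    ext i j
    refine Fin.cases ?_ ?_ j
    · simpa [colMat] using (hcol0 i)
    · intro j'; simp [colMat]
  refine
  { toFun := fun A => ⟨fun j i => A.1 i j.succ, ?_, ?_⟩
    invFun := fun s => ⟨colMat (Fin.cons 0 s.1), ?_, ?_⟩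
    left_inv := ?_
    right_inv := ?_ }
  · rw [← ker_colMat_cons_eq_iff, ← key A.1 A.2.1]
    exact A.2.1
  · have h2 := A.2.2
    rw [key A.1 A.2.1, range_colMat, span_range_cons_zero] at h2
    rwa [Submodule.span_singleton_le_iff_mem] at h2
  · exact (ker_colMat_cons_eq_iff s.1).mpr s.2.1
  · rw [range_colMat, span_range_cons_zero, Submodule.span_singleton_le_iff_mem]
    exact s.2.2
  · intro A
    exact Subtype.ext (key A.1 A.2.1).symm
  · intro s
    refine Subtype.ext ?_
    funext j i
    simp [colMat]

open Fintype in
attribute [local instance] Fintype.ofFinite in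
theorem card_T :
    Nat.card {A : Matrix (Fin (m+2)) (Fin (m+2)) F //
        LinearMap.ker A.mulVecLin = L ∧ L ≤ LinearMap.range A.mulVecLin} =
      ∏ i : Fin (m+1), (card F ^ (m+2) - card F ^ i.val) -
        ∏ i : Fin (m+1), (card F ^ (m+2) - card F ^ (i.val + 1)) := by
  classical
  rw [Nat.card_congr (TEquiv (F := F) (m := m))]
  have hQ : Nat.card {s : Fin (m+1) → VV // LinearIndependent F s ∧
      ¬ ((e₀ : VV) ∈ Submodule.span F (Set.range s))} =
      ∏ i : Fin (m+1), (card F ^ (m+2) - card F ^ (i.val + 1)) := by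
    have hc := card_linearIndependent_cons (K := F) (e₀ : VV) e0_ne_zero (k := m+1)
      (by rw [finrank_V])
    rw [finrank_V] at hc
    rw [← hc]
    exact Nat.card_congr (Equiv.subtypeEquivRight (fun s => by
      simp only [linearIndependent_fin_cons]
      try tauto))
  have hP : Nat.card {s : Fin (m+1) → VV // LinearIndependent F s} =
      ∏ i : Fin (m+1), (card F ^ (m+2) - card F ^ i.val) := by
    have hc := card_linearIndependent (K := F) (V := Fin (m+2) → F) (k := m+1)
      (by rw [finrank_V]; omega)
    rw [finrank_V] at hc
    exact hc
  have hsplit : Nat.card {s : Fin (m+1) → VV // LinearIndependent F s ∧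
      (e₀ : VV) ∈ Submodule.span F (Set.range s)} +
      Nat.card {s : Fin (m+1) → VV // LinearIndependent F s ∧
      ¬ ((e₀ : VV) ∈ Submodule.span F (Set.range s))} =
      Nat.card {s : Fin (m+1) → VV // LinearIndependent F s} := by
    rw [← Nat.card_sum]
    refine Nat.card_congr ?_
    refine Equiv.trans (Equiv.sumCongr
      (Equiv.subtypeSubtypeEquivSubtypeInter _ _).symm
      (Equiv.subtypeSubtypeEquivSubtypeInter _ (fun s => ¬ ((e₀ : VV) ∈ Submodule.span F (Set.range s)))).symm) ?_
    exact Equiv.sumCompl _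
  omega


lemma chain_lower_bound {M : Type*} [Mul M] [Finite M]
    (I : Subsemigroup M) (hne : (I : Set M).Nonempty) (T : Finset M)
    (hd : ∀ x ∈ T, x ∉ I)
    (hmul : ∀ a b : M, (a ∈ I ∨ a ∈ T) → (b ∈ I ∨ b ∈ T) → a * b ∈ I) :
    T.card ≤ semigroupLength M := by
  classical
  have : Finite (Subsemigroup M) :=
    Finite.of_injective (fun S => (S : Set M)) (fun _ _ h => SetLike.coe_injective h)
  -- the chain
  let e : Fin T.card ≃ {x // x ∈ T} := T.equivFin.symm
  let c : Fin (T.card + 1) → Subsemigroup M := fun i =>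
    { carrier := (I : Set M) ∪ {x | ∃ j : Fin T.card, (j : ℕ) < (i : ℕ) ∧ x = (e j : M)}
      mul_mem' := by
        rintro a b ha hb
        left
        refine hmul a b ?_ ?_
        · rcases ha with h | ⟨j, _, rfl⟩
          · exact Or.inl h
          · exact Or.inr (e j).2
        · rcases hb with h | ⟨j, _, rfl⟩
          · exact Or.inl h
          · exact Or.inr (e j).2 }
  have hmem : ∀ (i : Fin (T.card + 1)) (j : Fin T.card), ((j:ℕ) < (i:ℕ)) → (e j : M) ∈ c i :=
    fun i j h => Or.inr ⟨j, h, rfl⟩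
  have hsm : StrictMono c := by
    intro i i' hii
    constructor
    · intro x hx
      rcases hx with h | ⟨j, hj, rfl⟩
      · exact Or.inl h
      · exact Or.inr ⟨j, lt_of_lt_of_le hj (le_of_lt hii), rfl⟩
    · intro hle
      have hi : (i : ℕ) < T.card := lt_of_lt_of_le hii (Nat.lt_succ_iff.mp i'.2)
      have hx : (e ⟨i, hi⟩ : M) ∈ c i' := hmem i' ⟨i, hi⟩ hii
      have hx2 := hle hx
      rcases hx2 with h | ⟨j, hj, hj2⟩
      · exact hd _ (e ⟨i, hi⟩).2 h
      · have : j = ⟨i, hi⟩ := by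
          exact (e.injective (Subtype.ext hj2)).symm
        subst this
        exact absurd hj (lt_irrefl _)
  have hnon : ∀ i, ((c i : Set M)).Nonempty := fun i => hne.mono (Set.subset_union_left)
  have hbdd : BddAbove {k : ℕ | ∃ c : Fin (k + 1) → Subsemigroup M,
      StrictMono c ∧ ∀ i, ((c i : Set M)).Nonempty} := by
    refine ⟨Nat.card (Subsemigroup M), ?_⟩
    rintro k ⟨c, hc, -⟩
    have : k + 1 ≤ Nat.card (Subsemigroup M) := by
      have := Nat.card_le_card_of_injective c hc.injective
      simpa [Nat.card_eq_fintype_card] using this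
    omega
  exact le_csSup hbdd ⟨c, hsm, hnon⟩


def Isub : Subsemigroup (Matrix (Fin (m+2)) (Fin (m+2)) F) where
  carrier := {A : Matrix (Fin (m+2)) (Fin (m+2)) F | A.rank ≤ m}
  mul_mem' := fun {a b} ha _ => le_trans (Matrix.rank_mul_le_left a b) ha

def Tset : Set (Matrix (Fin (m+2)) (Fin (m+2)) F) :=
  {A : Matrix (Fin (m+2)) (Fin (m+2)) F | LinearMap.ker A.mulVecLin = L ∧
    L ≤ LinearMap.range A.mulVecLin}

open Fintype in
theorem count_le_semigroupLength :
    (∏ i : Fin (m+1), (card F ^ (m+2) - card F ^ i.val)) -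
      (∏ i : Fin (m+1), (card F ^ (m+2) - card F ^ (i.val + 1))) ≤
        semigroupLength (Matrix (Fin (m+2)) (Fin (m+2)) F) := by
  classical
  haveI : Fintype ↥(Tset (F := F) (m := m)) := Fintype.ofFinite _
  have hne : (((Isub (F := F) (m := m)) : Set (Matrix (Fin (m+2)) (Fin (m+2)) F))).Nonempty := by
    refine ⟨0, ?_⟩
    show Matrix.rank (0 : (Matrix (Fin (m+2)) (Fin (m+2)) F)) ≤ m
    simp
  have hd : ∀ x ∈ (Tset (F := F) (m := m)).toFinset, x ∉ Isub (F := F) (m := m) := by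
    intro x hx
    rw [Set.mem_toFinset] at hx
    intro hxI
    have h1 := rank_of_mem_T x hx.1
    have h2 : x.rank ≤ m := hxI
    omega
  have hmul : ∀ a b : (Matrix (Fin (m+2)) (Fin (m+2)) F),
      (a ∈ Isub (F := F) (m := m) ∨ a ∈ (Tset (F := F) (m := m)).toFinset) →
      (b ∈ Isub (F := F) (m := m) ∨ b ∈ (Tset (F := F) (m := m)).toFinset) →
      a * b ∈ Isub (F := F) (m := m) := by
    intro a b ha hb
    rcases ha with ha | ha
    · exact le_trans (Matrix.rank_mul_le_left a b) ha
    · rcases hb with hb | hb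
      · exact le_trans (Matrix.rank_mul_le_right a b) hb
      · rw [Set.mem_toFinset] at ha hb
        exact rank_mul_of_mem_T a b ha.1 hb.1 hb.2
  have hchain := chain_lower_bound (Isub (F := F) (m := m)) hne (Tset (F := F) (m := m)).toFinset hd hmul
  have hcard : (Tset (F := F) (m := m)).toFinset.card =
      (∏ i : Fin (m+1), (card F ^ (m+2) - card F ^ i.val)) -
        (∏ i : Fin (m+1), (card F ^ (m+2) - card F ^ (i.val + 1))) := by
    rw [Set.toFinset_card]
    rw [← Nat.card_eq_fintype_card]
    show Nat.card {A : Matrix (Fin (m+2)) (Fin (m+2)) F //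
        LinearMap.ker A.mulVecLin = L ∧ L ≤ LinearMap.range A.mulVecLin} = _
    exact card_T
  rw [hcard] at hchain
  exact hchain

end MatrixPart

section AnalysisAux
open Filter Finset

section Analysis
variable {q : ℕ} (hq2 : 2 ≤ q)

-- Weierstrass product inequality
lemma prod_one_sub_ge (x : ℕ → ℝ) (h0 : ∀ k, 0 ≤ x k) (h1 : ∀ k, x k ≤ 1) (N : ℕ) :
    1 - ∑ k ∈ range N, x k ≤ ∏ k ∈ range N, (1 - x k) := by
  induction N with
  | zero => simp
  | succ N ih =>
      rw [prod_range_succ, sum_range_succ]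
      have hs : 0 ≤ ∑ k ∈ range N, x k := Finset.sum_nonneg fun k _ => h0 k
      have h2 : (1 - ∑ k ∈ range N, x k) * (1 - x N) ≤
          (∏ k ∈ range N, (1 - x k)) * (1 - x N) :=
        mul_le_mul_of_nonneg_right ih (by linarith [h1 N])
      nlinarith [h0 N, mul_nonneg hs (h0 N)]

lemma fq_eq (k : ℕ) : (1 - ((q : ℝ) ^ (k + 1))⁻¹) = 1 - ((q:ℝ)⁻¹) ^ (k+1) := by
  rw [inv_pow]

include hq2

lemma t_pos : 0 < ((q:ℝ))⁻¹ := by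
  have : (0:ℝ) < q := by exact_mod_cast lt_of_lt_of_le (by norm_num) hq2
  positivity

lemma t_le_half : ((q:ℝ))⁻¹ ≤ 1/2 := by
  have h2 : (2:ℝ) ≤ q := by exact_mod_cast hq2
  rw [inv_le_comm₀ (by linarith) (by norm_num)]
  linarith

lemma tpow_nonneg (k : ℕ) : 0 ≤ ((q:ℝ))⁻¹ ^ k := by positivity

lemma tpow_le_one (k : ℕ) : ((q:ℝ))⁻¹ ^ k ≤ 1 :=
  pow_le_one₀ (le_of_lt (t_pos hq2)) (le_trans (t_le_half hq2) (by norm_num))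

lemma fq_pos (k : ℕ) : 0 < (1 - ((q : ℝ) ^ (k + 1))⁻¹) := by
  rw [fq_eq]
  have ht := t_pos hq2
  have hth := t_le_half hq2
  have h1 : ((q:ℝ))⁻¹ ^ (k+1) ≤ ((q:ℝ))⁻¹ ^ 1 :=
    pow_le_pow_of_le_one (le_of_lt ht) (by linarith) (by omega)
  rw [pow_one] at h1
  linarith

lemma fq_le_one (k : ℕ) : (1 - ((q : ℝ) ^ (k + 1))⁻¹) ≤ 1 := by
  rw [fq_eq]
  have := tpow_nonneg hq2 (k+1)
  linarith

lemma b_nonneg (N : ℕ) : 0 ≤ ∏ k ∈ range N, (1 - ((q : ℝ) ^ (k + 1))⁻¹) :=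
  Finset.prod_nonneg fun k _ => le_of_lt (fq_pos hq2 k)

lemma b_antitone {N M : ℕ} (h : N ≤ M) :
    ∏ k ∈ range M, (1 - ((q : ℝ) ^ (k + 1))⁻¹) ≤
      ∏ k ∈ range N, (1 - ((q : ℝ) ^ (k + 1))⁻¹) := by
  rw [← Finset.prod_range_mul_prod_Ico _ h]
  have h1 : ∏ k ∈ Finset.Ico N M, (1 - ((q : ℝ) ^ (k + 1))⁻¹) ≤ 1 :=
    Finset.prod_le_one (fun k _ => le_of_lt (fq_pos hq2 k)) (fun k _ => fq_le_one hq2 k)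
  have h2 := b_nonneg hq2 N
  nlinarith [Finset.prod_nonneg (fun k (_ : k ∈ Finset.Ico N M) => le_of_lt (fq_pos hq2 k))]

lemma b_lower (N : ℕ) :
    (1 - (q:ℝ)⁻¹) * (1 - (q:ℝ)⁻¹^2) * (1 - (q:ℝ)⁻¹^3) *
      (1 - (q:ℝ)⁻¹^4 / (1 - (q:ℝ)⁻¹)) ≤
    ∏ k ∈ range N, (1 - ((q : ℝ) ^ (k + 1))⁻¹) := by
  have ht := t_pos hq2
  have hth := t_le_half hq2
  set t : ℝ := (q:ℝ)⁻¹ with hts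
  have htlt : t < 1 := lt_of_le_of_lt hth (by norm_num)
  have hb3 : ∏ k ∈ range 3, (1 - ((q : ℝ) ^ (k + 1))⁻¹) =
      (1 - t) * (1 - t^2) * (1 - t^3) := by
    rw [Finset.prod_range_succ, Finset.prod_range_succ, Finset.prod_range_one]
    rw [fq_eq, fq_eq, fq_eq]
    norm_num [hts]
  have hb3nn : (0:ℝ) ≤ (1 - t) * (1 - t^2) * (1 - t^3) := by
    rw [← hb3]; exact b_nonneg hq2 3
  have hune : 1 - t^4 / (1 - t) ≤ 1 := by
    have : 0 ≤ t^4 / (1-t) := div_nonneg (by positivity) (by linarith)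
    linarith
  rcases le_or_gt N 3 with hN | hN
  · refine le_trans ?_ (b_antitone hq2 hN)
    rw [hb3]
    exact mul_le_of_le_one_right hb3nn hune
  · have hsplit := Finset.prod_range_mul_prod_Ico
      (fun k => (1 - ((q : ℝ) ^ (k + 1))⁻¹)) (le_of_lt hN)
    rw [← hsplit, hb3]
    have hico : 1 - t^4 / (1 - t) ≤ ∏ k ∈ Finset.Ico 3 N, (1 - ((q : ℝ) ^ (k + 1))⁻¹) := by
      rw [Finset.prod_Ico_eq_prod_range]
      have hW := prod_one_sub_ge (fun k => t ^ (k + 4))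
        (fun k => by positivity) (fun k => by
          calc t ^ (k+4) ≤ 1^(k+4) := pow_le_pow_left₀ (le_of_lt ht) (le_of_lt htlt) _
          _ = 1 := one_pow _) (N - 3)
      have hsum : ∑ k ∈ range (N-3), t ^ (k+4) ≤ t^4 / (1 - t) := by
        have h1t : (0:ℝ) < 1 - t := by linarith
        have hrw : ∑ k ∈ range (N-3), t ^ (k+4) = t^4 * ∑ k ∈ range (N-3), t ^ k := by
          rw [Finset.mul_sum]
          exact Finset.sum_congr rfl (fun k _ => by ring)
        have e : (t ^ (N-3) - 1) / (t - 1) = (1 - t^(N-3)) / (1 - t) := by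
          rw [div_eq_div_iff (by linarith : t - 1 < 0).ne h1t.ne']
          ring
        rw [hrw, geom_sum_eq (ne_of_lt htlt), e]
        have hx : (0:ℝ) ≤ t^(N-3) := by positivity
        calc t^4 * ((1 - t^(N-3))/(1-t)) ≤ t^4 * (1/(1-t)) := by
              gcongr
              linarith
          _ = t^4/(1-t) := by ring
      have heq : ∀ k, (1 - ((q : ℝ) ^ (3 + k + 1))⁻¹) = 1 - t ^ (k + 4) := by
        intro k
        rw [fq_eq]
        congr 1
        rw [hts]
        congr 1
        omega
      calc 1 - t^4/(1-t) ≤ 1 - ∑ k ∈ range (N-3), t ^ (k+4) := by linarith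
      _ ≤ ∏ k ∈ range (N-3), (1 - t ^ (k+4)) := hW
      _ = ∏ k ∈ range (N-3), (1 - ((q : ℝ) ^ (3 + k + 1))⁻¹) := by
          exact Finset.prod_congr rfl (fun k _ => by rw [heq k])
    calc (1 - t) * (1 - t^2) * (1 - t^3) * (1 - t^4 / (1 - t))
        ≤ (1 - t) * (1 - t^2) * (1 - t^3) *
          ∏ k ∈ Finset.Ico 3 N, (1 - ((q : ℝ) ^ (k + 1))⁻¹) :=
          mul_le_mul_of_nonneg_left hico hb3nn
      _ = _ := rfl

omit hq2 in
lemma keyR (t : ℝ) (h0 : 0 < t) (h2 : t ≤ 1/2) :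
    0 ≤ 1 - t - 2*t^2 + 2*t^3 - 2*t^4 + 4*t^5 - 3*t^6 + 2*t^7 + t^8 - 3*t^9 + t^10 := by
  have hp : ∀ k : ℕ, (0:ℝ) ≤ t^k := fun k => by positivity
  have hstep : ∀ k : ℕ, t^(k+1) ≤ t^k * (1/2) := by
    intro k
    calc t^(k+1) = t^k * t := by ring
    _ ≤ t^k * (1/2) := mul_le_mul_of_nonneg_left h2 (hp k)
  have e1 := hstep 1; have e2 := hstep 2; have e3 := hstep 3; have e4 := hstep 4
  have e5 := hstep 5; have e6 := hstep 6; have e7 := hstep 7; have e8 := hstep 8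
  have e9 := hstep 9
  have p1 := hp 1; have p2 := hp 2; have p3 := hp 3; have p4 := hp 4; have p5 := hp 5
  have p6 := hp 6; have p7 := hp 7; have p8 := hp 8; have p9 := hp 9; have p10 := hp 10
  have ht1 : t^1 ≤ 1/2 := by rw [pow_one]; exact h2
  linarith

lemma key_ineq (c : ℝ)
    (hc : (1 - (q:ℝ)⁻¹) * (1 - (q:ℝ)⁻¹^2) * (1 - (q:ℝ)⁻¹^3) *
      (1 - (q:ℝ)⁻¹^4 / (1 - (q:ℝ)⁻¹)) ≤ c) :
    (1 - c) * (1 - (q:ℝ)⁻¹)^2 ≤ c * (q:ℝ)⁻¹ / (1 - (q:ℝ)⁻¹) := by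
  have ht := t_pos hq2
  have hth := t_le_half hq2
  set t : ℝ := (q:ℝ)⁻¹ with hts
  have h1t : (0:ℝ) < 1 - t := by linarith
  set g : ℝ := (1 - t) * (1 - t^2) * (1 - t^3) * (1 - t^4 / (1 - t)) with hgs
  have hg_poly : g = (1 - t^2) * (1 - t^3) * (1 - t - t^4) := by
    rw [hgs]
    field_simp
  have hR := keyR t ht hth
  have step2 : (1 - g) * (1 - t)^2 ≤ g * t / (1 - t) := by
    rw [le_div_iff₀ h1t, hg_poly]
    nlinarith [mul_nonneg (sq_nonneg t) hR]
  have step1 : (1 - c) * (1 - t)^2 ≤ (1 - g) * (1 - t)^2 :=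
    mul_le_mul_of_nonneg_right (by linarith) (by positivity)
  have step3 : g * t / (1 - t) ≤ c * t / (1 - t) := by
    gcongr
  linarith

lemma analysis_main (hmulti : Multipliable (fun k : ℕ => (1 - ((q : ℝ) ^ (k + 1))⁻¹)))
    (ε : ℝ) (hε : 0 < ε) :
    ∃ N₀ : ℕ, ∀ m : ℕ, N₀ ≤ m →
      (1 - (∏' k : ℕ, (1 - ((q : ℝ) ^ (k + 1))⁻¹))) * (1 - 1/(q:ℝ))^2 - ε ≤
        (∏ k ∈ range (m+2), (1 - ((q : ℝ) ^ (k + 1))⁻¹)) / (1 - (q:ℝ)⁻¹) -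
          ∏ k ∈ range (m+1), (1 - ((q : ℝ) ^ (k + 1))⁻¹) := by
  have ht := t_pos hq2
  have hth := t_le_half hq2
  have h1t : (0:ℝ) < 1 - (q:ℝ)⁻¹ := by linarith
  set c : ℝ := ∏' k : ℕ, (1 - ((q : ℝ) ^ (k + 1))⁻¹) with hcs
  have htend := hmulti.hasProd.tendsto_prod_nat
  have hub : ∀ N, c ≤ ∏ k ∈ range N, (1 - ((q : ℝ) ^ (k + 1))⁻¹) := by
    intro N
    refine le_of_tendsto htend (eventually_atTop.2 ⟨N, fun M hM => b_antitone hq2 hM⟩)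
  have hlbc : (1 - (q:ℝ)⁻¹) * (1 - (q:ℝ)⁻¹^2) * (1 - (q:ℝ)⁻¹^3) *
      (1 - (q:ℝ)⁻¹^4 / (1 - (q:ℝ)⁻¹)) ≤ c :=
    ge_of_tendsto htend (Eventually.of_forall (b_lower hq2))
  obtain ⟨N₀, hN₀⟩ := (htend.eventually_lt_const
    (show c < c + ε/2 by linarith)).exists
  refine ⟨N₀, fun m hm => ?_⟩
  have hbm1 : ∏ k ∈ range (m+1), (1 - ((q : ℝ) ^ (k + 1))⁻¹) < c + ε/2 :=
    lt_of_le_of_lt (b_antitone hq2 (by omega)) hN₀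
  have hbm2 : c / (1 - (q:ℝ)⁻¹) ≤
      (∏ k ∈ range (m+2), (1 - ((q : ℝ) ^ (k + 1))⁻¹)) / (1 - (q:ℝ)⁻¹) := by
    gcongr
    exact hub (m+2)
  have halg : c / (1 - (q:ℝ)⁻¹) - c = c * (q:ℝ)⁻¹ / (1 - (q:ℝ)⁻¹) := by
    rw [eq_div_iff (ne_of_gt h1t), sub_mul, div_mul_cancel₀ _ (ne_of_gt h1t)]
    ring
  have hkey := key_ineq hq2 c hlbc
  have h1q : 1/(q:ℝ) = (q:ℝ)⁻¹ := one_div _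
  rw [h1q]
  linarith

end Analysis

end AnalysisAux

open Finset in
/-- Let `q` be a prime power and let `GLS(n,q)` be the multiplicative semigroup of all
`n×n` matrices over the field with `q` elements.  Then
`liminf_{n→∞} l(GLS(n,q)) / q^(n²−n) ≥ (1 − c(q))·(1 − 1/q)²`, where
`c(q) = ∏_{k=1}^∞ (1 − q^{−k})`.  (The liminf inequality is expressed in the usual
ε-form: for every `ε > 0`, eventually the ratio exceeds the bound minus `ε`.) -/
theorem semigroupLength_GLS (q : ℕ) (hq : ∃ p m : ℕ, p.Prime ∧ 0 < m ∧ q = p ^ m)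
    (F : Type) [Field F] [Fintype F] (hF : Fintype.card F = q) :
    ∀ ε : ℝ, 0 < ε → ∀ᶠ n : ℕ in atTop,
      (1 - (∏' k : ℕ, (1 - ((q : ℝ) ^ (k + 1))⁻¹))) * (1 - 1 / (q : ℝ)) ^ 2 - ε ≤
        (semigroupLength (Matrix (Fin n) (Fin n) F) : ℝ) / (q : ℝ) ^ (n ^ 2 - n) := by
  intro ε hε
  have hq2 : 2 ≤ q := by
    obtain ⟨p, k, hp, hk, rfl⟩ := hq
    calc 2 ≤ p := hp.two_le
    _ = p ^ 1 := (pow_one p).symm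
    _ ≤ p ^ k := Nat.pow_le_pow_right (le_trans one_le_two hp.two_le) hk
  have hq0 : (0:ℝ) < (q:ℝ) := by exact_mod_cast lt_of_lt_of_le (by norm_num) hq2
  by_cases hmulti : Multipliable (fun k : ℕ => (1 - ((q : ℝ) ^ (k + 1))⁻¹))
  · obtain ⟨N₀, hN₀⟩ := analysis_main hq2 hmulti ε hε
    filter_upwards [eventually_ge_atTop (N₀ + 2)] with n hn
    obtain ⟨m, rfl⟩ : ∃ m, n = m + 2 := ⟨n - 2, by omega⟩
    have hmain := hN₀ m (by omega)
    have hcount := count_le_semigroupLength (F := F) (m := m)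
    rw [hF] at hcount
    have ht := t_pos hq2
    have hth := t_le_half hq2
    have h1t : (0:ℝ) < 1 - (q:ℝ)⁻¹ := by linarith
    -- ℕ-side inequalities
    have hfacle : ∀ i : ℕ, i ≤ m + 1 → q ^ i ≤ q ^ (m+2) :=
      fun i hi => Nat.pow_le_pow_right (by omega) (by omega)
    have hQP : (∏ i : Fin (m+1), (q ^ (m+2) - q ^ (i.val + 1))) ≤
        (∏ i : Fin (m+1), (q ^ (m+2) - q ^ i.val)) := by
      refine Finset.prod_le_prod' ?_
      intro i _
      exact Nat.sub_le_sub_left (Nat.pow_le_pow_right (by omega) (by omega)) _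
    -- real-side product identities
    have hDpos : (0:ℝ) < (q:ℝ) ^ ((m+2)*(m+1)) := by positivity
    have hcast1 : ∀ i : ℕ, i ≤ m + 1 →
        ((q ^ (m+2) - q ^ i : ℕ) : ℝ) = (q:ℝ)^(m+2) * (1 - ((q:ℝ)⁻¹)^(m+2-i)) := by
      intro i hi
      rw [Nat.cast_sub (hfacle i hi)]
      push_cast
      have hsplit : (q:ℝ)^(m+2) = (q:ℝ)^i * (q:ℝ)^(m+2-i) := by
        rw [← pow_add]
        congr 1
        omega
      rw [inv_pow, mul_sub, mul_one]
      congr 1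
      rw [hsplit, mul_assoc, mul_inv_cancel₀ (by positivity), mul_one]
    have hPreal : ((∏ i : Fin (m+1), (q ^ (m+2) - q ^ i.val) : ℕ) : ℝ) =
        (q:ℝ) ^ ((m+2)*(m+1)) *
          ((∏ k ∈ range (m+2), (1 - ((q : ℝ) ^ (k + 1))⁻¹)) / (1 - (q:ℝ)⁻¹)) := by
      rw [Fin.prod_univ_eq_prod_range (fun i => q ^ (m+2) - q ^ i) (m+1), Nat.cast_prod]
      rw [Finset.prod_congr rfl (fun i hi => hcast1 i (by
        rw [Finset.mem_range] at hi; omega))]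
      rw [Finset.prod_mul_distrib, Finset.prod_const, Finset.card_range, ← pow_mul]
      congr 1
      have hrefl := Finset.prod_range_reflect (fun j => 1 - ((q:ℝ)⁻¹)^(j+2)) (m+1)
      have hlhs : ∏ j ∈ range (m+1), (1 - ((q:ℝ)⁻¹)^(m+2-j)) =
          ∏ j ∈ range (m+1), (1 - ((q:ℝ)⁻¹)^((m+1-1-j)+2)) := by
        refine Finset.prod_congr rfl (fun j hj => ?_)
        rw [Finset.mem_range] at hj
        congr 2
        omega
      rw [hlhs, hrefl]
      have hb : ∏ k ∈ range (m+2), (1 - ((q : ℝ) ^ (k + 1))⁻¹) =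
          (∏ j ∈ range (m+1), (1 - ((q:ℝ)⁻¹)^(j+2))) * (1 - (q:ℝ)⁻¹) := by
        rw [Finset.prod_range_succ' (fun k => (1 - ((q : ℝ) ^ (k + 1))⁻¹)) (m+1)]
        congr 1
        · refine Finset.prod_congr rfl (fun j hj => ?_)
          rw [fq_eq]
        · rw [pow_one]
      rw [hb, mul_div_cancel_right₀ _ (ne_of_gt h1t)]
    have hcast2 : ∀ i : ℕ, i ≤ m →
        ((q ^ (m+2) - q ^ (i+1) : ℕ) : ℝ) = (q:ℝ)^(m+2) * (1 - ((q:ℝ)⁻¹)^(m+1-i)) := by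
      intro i hi
      rw [Nat.cast_sub (hfacle (i+1) (by omega))]
      push_cast
      have hsplit : (q:ℝ)^(m+2) = (q:ℝ)^(i+1) * (q:ℝ)^(m+1-i) := by
        rw [← pow_add]
        congr 1
        omega
      rw [inv_pow, mul_sub, mul_one]
      congr 1
      rw [hsplit, mul_assoc, mul_inv_cancel₀ (by positivity), mul_one]
    have hQreal : ((∏ i : Fin (m+1), (q ^ (m+2) - q ^ (i.val+1)) : ℕ) : ℝ) =
        (q:ℝ) ^ ((m+2)*(m+1)) *
          (∏ k ∈ range (m+1), (1 - ((q : ℝ) ^ (k + 1))⁻¹)) := by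
      rw [Fin.prod_univ_eq_prod_range (fun i => q ^ (m+2) - q ^ (i+1)) (m+1), Nat.cast_prod]
      rw [Finset.prod_congr rfl (fun i hi => hcast2 i (by
        rw [Finset.mem_range] at hi; omega))]
      rw [Finset.prod_mul_distrib, Finset.prod_const, Finset.card_range, ← pow_mul]
      congr 1
      have hrefl := Finset.prod_range_reflect (fun j => 1 - ((q:ℝ)⁻¹)^(j+1)) (m+1)
      have hlhs : ∏ j ∈ range (m+1), (1 - ((q:ℝ)⁻¹)^(m+1-j)) =
          ∏ j ∈ range (m+1), (1 - ((q:ℝ)⁻¹)^((m+1-1-j)+1)) := by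
        refine Finset.prod_congr rfl (fun j hj => ?_)
        rw [Finset.mem_range] at hj
        congr 2
        omega
      rw [hlhs, hrefl]
      refine Finset.prod_congr rfl (fun j hj => ?_)
      rw [fq_eq]
    -- exponent arithmetic
    have hexp : (m+2)^2 - (m+2) = (m+2)*(m+1) := by
      have e1 : (m+2)^2 = (m+2)*(m+2) := by ring
      have e2 : (m+2)*(m+2) = m*m+4*m+4 := by ring
      have e3 : (m+2)*(m+1) = m*m+3*m+2 := by ring
      omega
    rw [hexp]
    rw [le_div_iff₀ hDpos]
    -- chain the inequalities
    have hSL : ((∏ i : Fin (m+1), (q ^ (m+2) - q ^ i.val) : ℕ) : ℝ) -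
        ((∏ i : Fin (m+1), (q ^ (m+2) - q ^ (i.val+1)) : ℕ) : ℝ) ≤
        (semigroupLength (Matrix (Fin (m+2)) (Fin (m+2)) F) : ℝ) := by
      rw [← Nat.cast_sub hQP]
      exact_mod_cast hcount
    rw [hPreal, hQreal] at hSL
    have hfinal : ((1 - (∏' k : ℕ, (1 - ((q : ℝ) ^ (k + 1))⁻¹))) * (1 - 1 / (q : ℝ)) ^ 2 - ε) *
        ((q:ℝ) ^ ((m+2)*(m+1))) ≤
        (q:ℝ) ^ ((m+2)*(m+1)) *
          ((∏ k ∈ range (m+2), (1 - ((q : ℝ) ^ (k + 1))⁻¹)) / (1 - (q:ℝ)⁻¹)) -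
        (q:ℝ) ^ ((m+2)*(m+1)) *
          (∏ k ∈ range (m+1), (1 - ((q : ℝ) ^ (k + 1))⁻¹)) := by
      rw [← mul_sub, mul_comm]
      exact mul_le_mul_of_nonneg_left hmain (le_of_lt hDpos)
    linarith
  · refine Eventually.of_forall (fun n => ?_)
    rw [tprod_eq_one_of_not_multipliable hmulti]
    have h1 : (0:ℝ) ≤ (semigroupLength (Matrix (Fin n) (Fin n) F) : ℝ) / (q : ℝ) ^ (n ^ 2 - n) := by
      positivity
    nlinarith [sq_nonneg (1 - 1/(q:ℝ))]
end

section
/- Let G be a finite group and let n be a positive integer. Then the length of the Brandt semigroup B(G,n) satisfies l(B(G,n)) = n(l(G) + 2) + (n(n−1)/2)·|G| − 1. -/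
/-- The length of a finite group `G`: the largest `k` such that there is a strictly
increasing chain of subgroups `G₀ < G₁ < ⋯ < G_k` of `G`. -/
noncomputable def groupLength (G : Type*) [Group G] : ℕ :=
  sSup {k : ℕ | ∃ c : Fin (k + 1) → Subgroup G, StrictMono c}

/-- The Brandt semigroup `B(G,n)`: elements `({1,…,n} × G × {1,…,n}) ∪ {0}`, with the
zero represented by `none`. -/
def Brandt (G : Type*) (n : ℕ) : Type _ :=
  Option (Fin n × G × Fin n)

/-- Multiplication in the Brandt semigroup:
`(i,g,j)(k,h,l) = (i,gh,l)` if `j = k` and `0` otherwise; `0` is absorbing. -/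
instance {G : Type*} [Mul G] {n : ℕ} : Mul (Brandt G n) :=
  ⟨fun a b =>
    match a, b with
    | some (i, g, j), some (k, h, l) =>
        if j = k then (some (i, g * h, l) : Brandt G n) else (none : Brandt G n)
    | _, _ => (none : Brandt G n)⟩


set_option linter.unusedSectionVars false
open Finset

section ChainTools

variable {α : Type*} [Preorder α]

/-- From a ℕ-indexed stepwise-strict chain, get a `Fin`-indexed strict mono chain. -/
lemma strictMono_fin_of_nat (c : ℕ → α) (k : ℕ) (h : ∀ m < k, c m < c (m + 1)) :
    StrictMono (fun i : Fin (k + 1) => c i.val) := by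
  have key : ∀ b, b ≤ k → ∀ a, a < b → c a < c b := by
    intro b hb
    induction b with
    | zero => omega
    | succ b ih =>
      intro a ha
      rcases Nat.lt_or_ge a b with h'|h'
      · exact lt_trans (ih (by omega) a h') (h b (by omega))
      · have : a = b := by omega
        subst this; exact h a (by omega)
  intro i j hij
  exact key j.val (by omega) i.val hij

/-- From a `Fin`-indexed strict chain, get a ℕ-indexed stepwise-strict chain. -/
lemma nat_chain_of_fin (c : Fin (k + 1) → α) (hc : StrictMono c) :
    ∀ m < k, (fun m : ℕ => c ⟨min m k, by omega⟩) m < (fun m : ℕ => c ⟨min m k, by omega⟩) (m+1) := by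
  intro m hm
  apply hc
  simp only [Fin.mk_lt_mk]
  omega

end ChainTools

section GroupSide

variable {G : Type*} [Group G] [Fintype G]

/-- powers stay in a multiplicatively closed set -/
lemma pow_mem_closed {A : Set G} (hA : ∀ a ∈ A, ∀ b ∈ A, a * b ∈ A) {a : G} (ha : a ∈ A) :
    ∀ m : ℕ, a ^ (m + 1) ∈ A := by
  intro m
  induction m with
  | zero => simpa using ha
  | succ m ih => rw [pow_succ]; exact hA _ ih _ ha

lemma one_mem_closed {A : Set G} (hA : ∀ a ∈ A, ∀ b ∈ A, a * b ∈ A) (hne : A.Nonempty) :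
    (1 : G) ∈ A := by
  obtain ⟨a, ha⟩ := hne
  have h1 : a ^ orderOf a ∈ A := by
    have := pow_mem_closed hA ha (orderOf a - 1)
    rwa [Nat.sub_add_cancel (orderOf_pos a)] at this
  rwa [pow_orderOf_eq_one] at h1

lemma inv_mem_closed {A : Set G} (hA : ∀ a ∈ A, ∀ b ∈ A, a * b ∈ A) {a : G} (ha : a ∈ A) :
    a⁻¹ ∈ A := by
  have hpos := orderOf_pos a
  have hmul : a * a ^ (orderOf a - 1) = 1 := by
    rw [← pow_succ']
    rw [Nat.sub_add_cancel hpos]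
    exact pow_orderOf_eq_one a
  have hinv : a⁻¹ = a ^ (orderOf a - 1) := inv_eq_of_mul_eq_one_right hmul
  rcases Nat.eq_zero_or_pos (orderOf a - 1) with h0 | h0
  · rw [hinv, h0, pow_zero]
    exact one_mem_closed hA ⟨a, ha⟩
  · rw [hinv, ← Nat.sub_add_cancel h0]
    exact pow_mem_closed hA ha _

end GroupSide
section GroupSide2
set_option linter.unusedSectionVars false

variable {G : Type*} [Group G] [Fintype G]

/-- A nonempty multiplicatively closed subset of a finite group is a subgroup. -/
def closedSubgroup (A : Set G) (hA : ∀ a ∈ A, ∀ b ∈ A, a * b ∈ A) (hne : A.Nonempty) :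
    Subgroup G where
  carrier := A
  mul_mem' := fun ha hb => hA _ ha _ hb
  one_mem' := one_mem_closed hA hne
  inv_mem' := fun ha => inv_mem_closed hA ha

@[simp] lemma closedSubgroup_coe (A : Set G) (hA) (hne) :
    ((closedSubgroup A hA hne : Subgroup G) : Set G) = A := rfl

/-- Cardinalities strictly increase along strict chains of subgroups. -/
lemma subgroup_chain_le {k : ℕ} (c : Fin (k + 1) → Subgroup G) (hc : StrictMono c) :
    k ≤ Fintype.card G := by
  have key : ∀ m : ℕ, (hm : m ≤ k) → m + 1 ≤ ((c ⟨m, by omega⟩ : Set G)).ncard := by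
    intro m
    induction m with
    | zero =>
      intro hm
      have h1 : (1 : G) ∈ (c ⟨0, by omega⟩ : Set G) := (c _).one_mem
      have h := (Set.ncard_pos (s := (c ⟨0, by omega⟩ : Set G)) (Set.toFinite _)).mpr ⟨1, h1⟩
      omega
    | succ m ih =>
      intro hm
      have h1 := ih (by omega)
      have hlt : c ⟨m, by omega⟩ < c ⟨m + 1, by omega⟩ := hc (by simp [Fin.mk_lt_mk])
      have hss : (c ⟨m, by omega⟩ : Set G) ⊂ (c ⟨m + 1, by omega⟩ : Set G) :=
        SetLike.coe_ssubset_coe.mpr hlt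
      have := Set.ncard_lt_ncard hss (Set.toFinite _)
      omega
  have h2 := key k le_rfl
  have hle : ((c ⟨k, by omega⟩ : Set G)).ncard ≤ Fintype.card G := by
    have h1 := Set.ncard_le_ncard (Set.subset_univ ((c ⟨k, by omega⟩ : Set G))) (Set.toFinite _)
    rwa [Set.ncard_univ, Nat.card_eq_fintype_card] at h1
  omega

/-- relative length of a multiplicatively closed set -/
noncomputable def glen (A : Set G) : ℕ :=
  sSup {k : ℕ | ∃ c : Fin (k + 1) → Subgroup G, StrictMono c ∧ ∀ m, ((c m : Set G)) ⊆ A}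

lemma glen_bddAbove (A : Set G) :
    BddAbove {k : ℕ | ∃ c : Fin (k + 1) → Subgroup G, StrictMono c ∧ ∀ m, ((c m : Set G)) ⊆ A} :=
  ⟨Fintype.card G, fun _k hk => by obtain ⟨c, hc, -⟩ := hk; exact subgroup_chain_le c hc⟩

lemma glen_set_nonempty (A : Set G) (hA : ∀ a ∈ A, ∀ b ∈ A, a * b ∈ A) (hne : A.Nonempty) :
    (0:ℕ) ∈ {k : ℕ | ∃ c : Fin (k + 1) → Subgroup G, StrictMono c ∧ ∀ m, ((c m : Set G)) ⊆ A} := by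
  refine ⟨fun _ => closedSubgroup A hA hne, ?_, fun m => by simp⟩
  intro i j hij
  exact absurd hij (by omega)

lemma glen_mono {A B : Set G} (hA : ∀ a ∈ A, ∀ b ∈ A, a * b ∈ A) (hne : A.Nonempty)
    (hAB : A ⊆ B) : glen A ≤ glen B := by
  apply csSup_le_csSup (glen_bddAbove B) ⟨0, glen_set_nonempty A hA hne⟩
  rintro k ⟨c, hc, hsub⟩
  exact ⟨c, hc, fun m => (hsub m).trans hAB⟩

lemma glen_strict {A B : Set G} (hA : ∀ a ∈ A, ∀ b ∈ A, a * b ∈ A) (hne : A.Nonempty)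
    (hB : ∀ a ∈ B, ∀ b ∈ B, a * b ∈ B) (hAB : A ⊆ B) {x : G} (hxB : x ∈ B) (hxA : x ∉ A) :
    glen A < glen B := by
  have hmem : ∃ c : Fin (glen A + 1) → Subgroup G, StrictMono c ∧ ∀ m, ((c m : Set G)) ⊆ A :=
    Nat.sSup_mem ⟨0, glen_set_nonempty A hA hne⟩ (glen_bddAbove A)
  obtain ⟨c, hc, hsub⟩ := hmem
  have hBne : B.Nonempty := ⟨x, hxB⟩
  have hlast : c ⟨glen A, by omega⟩ < closedSubgroup B hB hBne := by
    refine lt_of_le_of_ne (fun y hy => hAB (hsub _ hy)) (fun h => hxA (hsub ⟨glen A, by omega⟩ ?_))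
    show x ∈ (c ⟨glen A, by omega⟩ : Set G)
    rw [h]
    exact hxB
  have hk1 : glen A + 1 ∈
      {k : ℕ | ∃ c : Fin (k + 1) → Subgroup G, StrictMono c ∧ ∀ m, ((c m : Set G)) ⊆ B} := by
    refine ⟨fun i => if h : i.val < glen A + 1 then c ⟨i.val, h⟩ else closedSubgroup B hB hBne,
      ?_, ?_⟩
    · have hsteps : ∀ m < glen A + 1,
          (fun m : ℕ => if h : m < glen A + 1 then c ⟨m, h⟩ else closedSubgroup B hB hBne) m <
          (fun m : ℕ => if h : m < glen A + 1 then c ⟨m, h⟩ else closedSubgroup B hB hBne)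
            (m + 1) := by
        intro m hm
        simp only
        rcases Nat.lt_or_ge m (glen A) with h | h
        · rw [dif_pos (by omega : m < glen A + 1), dif_pos (by omega : m + 1 < glen A + 1)]
          exact hc (by simp only [Fin.mk_lt_mk]; omega)
        · have hmk : m = glen A := by omega
          rw [dif_pos (by omega : m < glen A + 1), dif_neg (by omega : ¬ m + 1 < glen A + 1)]
          have heq : (⟨m, by omega⟩ : Fin (glen A + 1)) = ⟨glen A, by omega⟩ := by
            simp only [Fin.mk.injEq]; omega
          rw [heq]
          exact hlast
      exact strictMono_fin_of_nat _ (glen A + 1) hsteps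
    · intro m
      by_cases hm : (m : Fin (glen A + 2)).val < glen A + 1
      · simp only [dif_pos hm]
        exact (hsub _).trans hAB
      · simp only [dif_neg hm]
        exact fun y hy => hy
  have h2 : glen A + 1 ≤ glen B := le_csSup (glen_bddAbove B) hk1
  omega

end GroupSide2
section GroupSide3
set_option linter.unusedSectionVars false

variable {G : Type*} [Group G] [Fintype G]

lemma glen_univ : glen (Set.univ : Set G) = groupLength G := by
  unfold glen groupLength
  congr 1
  ext k
  exact ⟨fun ⟨c, hc, _⟩ => ⟨c, hc⟩, fun ⟨c, hc⟩ => ⟨c, hc, fun m => Set.subset_univ _⟩⟩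

lemma groupLength_set_bdd :
    BddAbove {k : ℕ | ∃ c : Fin (k + 1) → Subgroup G, StrictMono c} :=
  ⟨Fintype.card G, fun _k hk => by obtain ⟨c, hc⟩ := hk; exact subgroup_chain_le c hc⟩

lemma groupLength_set_nonempty :
    (0:ℕ) ∈ {k : ℕ | ∃ c : Fin (k + 1) → Subgroup G, StrictMono c} :=
  ⟨fun _ => ⊥, fun i j hij => absurd hij (by omega)⟩

/-- There is an optimal subgroup chain from `⊥` to `⊤`, as a ℕ-indexed chain. -/
lemma exists_opt_subgroup_chain :
    ∃ d : ℕ → Subgroup G, d 0 = ⊥ ∧ d (groupLength G) = ⊤ ∧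
      ∀ m < groupLength G, d m < d (m + 1) := by
  have hmem : ∃ c : Fin (groupLength G + 1) → Subgroup G, StrictMono c :=
    Nat.sSup_mem ⟨0, groupLength_set_nonempty⟩ groupLength_set_bdd
  obtain ⟨c, hc⟩ := hmem
  -- bottom is ⊥
  have hbot : c 0 = ⊥ := by
    by_contra hne
    have hsteps : ∀ m < groupLength G + 1,
        (fun m : ℕ => if h : m < groupLength G + 1 then
            (if m = 0 then ⊥ else c ⟨m - 1, by omega⟩) else c ⟨groupLength G, by omega⟩) m <
        (fun m : ℕ => if h : m < groupLength G + 1 then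
            (if m = 0 then ⊥ else c ⟨m - 1, by omega⟩) else c ⟨groupLength G, by omega⟩)
          (m + 1) := by
      intro m hm
      simp only
      rcases Nat.eq_zero_or_pos m with h0 | h0
      · subst h0
        rcases Nat.lt_or_ge 1 (groupLength G + 1) with h1 | h1
        · rw [dif_pos (by omega), dif_pos (by omega : 0 + 1 < groupLength G + 1), if_pos rfl,
            if_neg (by omega)]
          have heq : (⟨0 + 1 - 1, by omega⟩ : Fin (groupLength G + 1)) = 0 := by
            simp [Fin.ext_iff]
          rw [heq]
          exact Ne.bot_lt' (Ne.symm hne)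
        · rw [dif_pos (by omega), dif_neg (by omega), if_pos rfl]
          have heq : (⟨groupLength G, by omega⟩ : Fin (groupLength G + 1)) = 0 := by
            simp only [Fin.ext_iff]; omega
          rw [heq]
          exact Ne.bot_lt' (Ne.symm hne)
      · rcases Nat.lt_or_ge (m + 1) (groupLength G + 1) with h1 | h1
        · rw [dif_pos (by omega), dif_pos (by omega), if_neg (by omega), if_neg (by omega)]
          exact hc (by simp only [Fin.mk_lt_mk]; omega)
        · rw [dif_pos (by omega), dif_neg (by omega), if_neg (by omega)]
          exact hc (by simp only [Fin.mk_lt_mk]; omega)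
    have hmem2 : groupLength G + 1 ∈ {k : ℕ | ∃ c : Fin (k + 1) → Subgroup G, StrictMono c} :=
      ⟨_, strictMono_fin_of_nat _ (groupLength G + 1) hsteps⟩
    have := le_csSup groupLength_set_bdd hmem2
    have : groupLength G + 1 ≤ groupLength G := this
    omega
  have htop : c ⟨groupLength G, by omega⟩ = ⊤ := by
    by_contra hne
    have hsteps : ∀ m < groupLength G + 1,
        (fun m : ℕ => if h : m < groupLength G + 1 then c ⟨m, h⟩ else ⊤) m <
        (fun m : ℕ => if h : m < groupLength G + 1 then c ⟨m, h⟩ else ⊤) (m + 1) := by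
      intro m hm
      simp only
      rcases Nat.lt_or_ge (m + 1) (groupLength G + 1) with h1 | h1
      · rw [dif_pos (by omega), dif_pos (by omega)]
        exact hc (by simp only [Fin.mk_lt_mk]; omega)
      · rw [dif_pos (by omega), dif_neg (by omega)]
        have hm' : m = groupLength G := by omega
        have heq : (⟨m, by omega⟩ : Fin (groupLength G + 1)) = ⟨groupLength G, by omega⟩ := by
          simp only [Fin.mk.injEq]; omega
        rw [heq]
        exact Ne.lt_top hne
    have hmem2 : groupLength G + 1 ∈ {k : ℕ | ∃ c : Fin (k + 1) → Subgroup G, StrictMono c} :=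
      ⟨_, strictMono_fin_of_nat _ (groupLength G + 1) hsteps⟩
    have h3 : groupLength G + 1 ≤ groupLength G := le_csSup groupLength_set_bdd hmem2
    omega
  refine ⟨fun m => c ⟨min m (groupLength G), by omega⟩, ?_, ?_, ?_⟩
  · show c ⟨min 0 (groupLength G), by omega⟩ = ⊥
    have heq : (⟨min 0 (groupLength G), by omega⟩ : Fin (groupLength G + 1)) = 0 := by
      simp [Fin.ext_iff]
    rw [heq, hbot]
  · show c ⟨min (groupLength G) (groupLength G), by omega⟩ = ⊤
    simpa using htop
  · intro m hm
    apply hc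
    simp only [Fin.mk_lt_mk]
    omega

end GroupSide3
section BrandtMeasure
set_option linter.unusedSectionVars false
open scoped Classical

variable {G : Type*} [Group G] [Fintype G] {n : ℕ}

/-- `(i,g,j)` as an element of the Brandt semigroup -/
def bsome (i : Fin n) (g : G) (j : Fin n) : Brandt G n := some (i, g, j)

/-- the zero of the Brandt semigroup -/
def bzero : Brandt G n := none

lemma brandt_mul_some (i : Fin n) (g : G) (j k : Fin n) (h : G) (l : Fin n) :
    bsome i g j * bsome k h l =
      if j = k then (bsome i (g * h) l : Brandt G n) else bzero := rfl

/-- the `(i,j)` block of a subsemigroup, as a subset of `G` -/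
def BE (S : Subsemigroup (Brandt G n)) (i j : Fin n) : Set G :=
  {g | bsome i g j ∈ S}

lemma BE_mul_mem {S : Subsemigroup (Brandt G n)} {i j k : Fin n} {g h : G}
    (hg : g ∈ BE S i j) (hh : h ∈ BE S j k) : g * h ∈ BE S i k := by
  have hm := S.mul_mem hg hh
  rw [brandt_mul_some, if_pos rfl] at hm
  exact hm

lemma BE_closed (S : Subsemigroup (Brandt G n)) (i : Fin n) :
    ∀ a ∈ BE S i i, ∀ b ∈ BE S i i, a * b ∈ BE S i i :=
  fun _ ha _ hb => BE_mul_mem ha hb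

lemma BE_mono {S T : Subsemigroup (Brandt G n)} (hST : S ≤ T) (i j : Fin n) :
    BE S i j ⊆ BE T i j := fun _ hg => hST hg

/-- diagonal contribution to the measure -/
noncomputable def dterm (S : Subsemigroup (Brandt G n)) (i : Fin n) : ℕ :=
  if (BE S i i).Nonempty then glen (BE S i i) + 1 else 0

/-- two-sided connectivity relation -/
def Rrel (S : Subsemigroup (Brandt G n)) (i j : Fin n) : Prop :=
  i ≠ j ∧ (BE S i j).Nonempty ∧ (BE S j i).Nonempty

lemma Rrel_symm {S : Subsemigroup (Brandt G n)} {i j : Fin n} (h : Rrel S i j) : Rrel S j i :=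
  ⟨h.1.symm, h.2.2, h.2.1⟩

lemma Rrel_trans {S : Subsemigroup (Brandt G n)} {i j k : Fin n} (hij : Rrel S i j)
    (hjk : Rrel S j k) (hik : i ≠ k) : Rrel S i k := by
  obtain ⟨-, ⟨a, ha⟩, ⟨b, hb⟩⟩ := hij
  obtain ⟨-, ⟨c, hc⟩, ⟨d, hd⟩⟩ := hjk
  exact ⟨hik, ⟨a * c, BE_mul_mem ha hc⟩, ⟨d * b, BE_mul_mem hd hb⟩⟩

lemma Rrel_mono {S T : Subsemigroup (Brandt G n)} (hST : S ≤ T) {i j : Fin n}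
    (h : Rrel S i j) : Rrel T i j :=
  ⟨h.1, h.2.1.mono (BE_mono hST i j), h.2.2.mono (BE_mono hST j i)⟩

/-- non-representative indices: diagonal indices related to a smaller one -/
noncomputable def NR (S : Subsemigroup (Brandt G n)) : Finset (Fin n) :=
  Finset.univ.filter (fun j => ∃ i, i < j ∧ Rrel S i j)

lemma NR_mono {S T : Subsemigroup (Brandt G n)} (hST : S ≤ T) : NR S ⊆ NR T := by
  classical
  intro j hj
  simp only [NR, Finset.mem_filter, Finset.mem_univ, true_and] at hj ⊢
  obtain ⟨i, hij, hR⟩ := hj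
  exact ⟨i, hij, Rrel_mono hST hR⟩

/-- off-diagonal pair contribution -/
noncomputable def pairterm (S : Subsemigroup (Brandt G n)) (i j : Fin n) : ℕ :=
  max (BE S i j).ncard (BE S j i).ncard

lemma pairterm_mono {S T : Subsemigroup (Brandt G n)} (hST : S ≤ T) (i j : Fin n) :
    pairterm S i j ≤ pairterm T i j :=
  max_le_max (Set.ncard_le_ncard (BE_mono hST i j) (Set.toFinite _))
    (Set.ncard_le_ncard (BE_mono hST j i) (Set.toFinite _))

/-- the measure -/
noncomputable def mu (S : Subsemigroup (Brandt G n)) : ℕ :=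
  (if (bzero : Brandt G n) ∈ S then 1 else 0) + (∑ i : Fin n, dterm S i) + (NR S).card +
    ∑ j : Fin n, ∑ i ∈ Finset.Iio j, pairterm S i j

lemma dterm_mono {S T : Subsemigroup (Brandt G n)} (hST : S ≤ T) (i : Fin n) :
    dterm S i ≤ dterm T i := by
  unfold dterm
  split_ifs with h1 h2 h2
  · have := glen_mono (BE_closed S i) h1 (BE_mono hST i i)
    omega
  · exact absurd (h1.mono (BE_mono hST i i)) h2
  · omega
  · omega

lemma zterm_mono {S T : Subsemigroup (Brandt G n)} (hST : S ≤ T) :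
    (if (bzero : Brandt G n) ∈ S then 1 else 0) ≤ (if (bzero : Brandt G n) ∈ T then 1 else 0) := by
  split_ifs with h1 h2 h2
  · omega
  · exact absurd (hST h1) h2
  · omega
  · omega

lemma mu_mono_parts {S T : Subsemigroup (Brandt G n)} (hST : S ≤ T) :
    (∑ i : Fin n, dterm S i) ≤ (∑ i : Fin n, dterm T i) ∧
    (NR S).card ≤ (NR T).card ∧
    (∑ j : Fin n, ∑ i ∈ Finset.Iio j, pairterm S i j) ≤
      (∑ j : Fin n, ∑ i ∈ Finset.Iio j, pairterm T i j) :=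
  ⟨Finset.sum_le_sum fun i _ => dterm_mono hST i,
   Finset.card_le_card (NR_mono hST),
   Finset.sum_le_sum fun j _ => Finset.sum_le_sum fun i _ => pairterm_mono hST i j⟩

end BrandtMeasure
section BrandtStrict
set_option linter.unusedSectionVars false
open scoped Classical

variable {G : Type*} [Group G] [Fintype G] {n : ℕ}

lemma mu_lt_of_z {S T : Subsemigroup (Brandt G n)} (hST : S ≤ T)
    (h : (if (bzero : Brandt G n) ∈ S then 1 else 0) < (if (bzero : Brandt G n) ∈ T then 1 else 0)) :
    mu S < mu T := by
  unfold mu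
  have h1 := (mu_mono_parts hST).1
  have h2 := (mu_mono_parts hST).2.1
  have h3 := (mu_mono_parts hST).2.2
  omega

lemma mu_lt_of_dterm {S T : Subsemigroup (Brandt G n)} (hST : S ≤ T) (i : Fin n)
    (h : dterm S i < dterm T i) : mu S < mu T := by
  have hd : (∑ i : Fin n, dterm S i) < (∑ i : Fin n, dterm T i) :=
    Finset.sum_lt_sum (fun k _ => dterm_mono hST k) ⟨i, Finset.mem_univ i, h⟩
  unfold mu
  have h1 := zterm_mono hST
  have h2 := (mu_mono_parts hST).2.1
  have h3 := (mu_mono_parts hST).2.2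
  omega

lemma mu_lt_of_nr {S T : Subsemigroup (Brandt G n)} (hST : S ≤ T)
    (h : (NR S).card < (NR T).card) : mu S < mu T := by
  unfold mu
  have h1 := zterm_mono hST
  have h2 := (mu_mono_parts hST).1
  have h3 := (mu_mono_parts hST).2.2
  omega

lemma mu_lt_of_pair {S T : Subsemigroup (Brandt G n)} (hST : S ≤ T) {a b : Fin n} (hab : a < b)
    (h : pairterm S a b < pairterm T a b) : mu S < mu T := by
  have hp : (∑ j : Fin n, ∑ i ∈ Finset.Iio j, pairterm S i j) <
      (∑ j : Fin n, ∑ i ∈ Finset.Iio j, pairterm T i j) := by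
    refine Finset.sum_lt_sum (fun j _ => Finset.sum_le_sum fun i _ => pairterm_mono hST i j)
      ⟨b, Finset.mem_univ b, ?_⟩
    exact Finset.sum_lt_sum (fun i _ => pairterm_mono hST i b)
      ⟨a, Finset.mem_Iio.mpr hab, h⟩
  unfold mu
  have h1 := zterm_mono hST
  have h2 := (mu_mono_parts hST).1
  have h3 := (mu_mono_parts hST).2.1
  omega

lemma dterm_lt_of_new {S T : Subsemigroup (Brandt G n)} (hST : S ≤ T) (i : Fin n)
    (hS : ¬ (BE S i i).Nonempty) (hT : (BE T i i).Nonempty) : dterm S i < dterm T i := by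
  unfold dterm
  rw [if_neg hS, if_pos hT]
  omega

lemma dterm_lt_of_grow {S T : Subsemigroup (Brandt G n)} (hST : S ≤ T) (i : Fin n)
    (hS : (BE S i i).Nonempty) {x : G} (hxT : x ∈ BE T i i) (hxS : x ∉ BE S i i) :
    dterm S i < dterm T i := by
  unfold dterm
  rw [if_pos hS, if_pos ⟨x, hxT⟩]
  have := glen_strict (BE_closed S i) hS (BE_closed T i) (BE_mono hST i i) hxT hxS
  omega

/-- the class of `k` : indices related to `k`, plus `k` itself. -/
noncomputable def cls (S : Subsemigroup (Brandt G n)) (k : Fin n) : Finset (Fin n) :=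
  insert k (Finset.univ.filter (fun u => Rrel S u k))

lemma cls_nonempty (S : Subsemigroup (Brandt G n)) (k : Fin n) : (cls S k).Nonempty :=
  ⟨k, Finset.mem_insert_self k _⟩

lemma mem_cls {S : Subsemigroup (Brandt G n)} {k u : Fin n} :
    u ∈ cls S k ↔ u = k ∨ Rrel S u k := by
  simp [cls]

/-- key step: a new two-sided connection merging two classes adds a non-representative -/
lemma NR_lt_aux {S T : Subsemigroup (Brandt G n)} (hST : S ≤ T) {i j a b : Fin n} (hij : i ≠ j)
    (hnS : ¬ Rrel S i j) (hRT : Rrel T i j)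
    (hai : a = i ∨ Rrel S a i) (hbj : b = j ∨ Rrel S b j)
    (hminb : ∀ u ∈ cls S j, b ≤ u) (hab : a < b) :
    (NR S).card < (NR T).card := by
  -- b is not in NR S
  have hbS : b ∉ NR S := by
    intro hmem
    simp only [NR, Finset.mem_filter, Finset.mem_univ, true_and] at hmem
    obtain ⟨u, hub, hR⟩ := hmem
    have hu : u ∈ cls S j := by
      rcases hbj with rfl | hbj'
      · exact mem_cls.mpr (Or.inr hR)
      · by_cases huj : u = j
        · exact mem_cls.mpr (Or.inl huj)
        · exact mem_cls.mpr (Or.inr (Rrel_trans hR hbj' huj))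
    exact absurd (lt_of_le_of_lt (hminb u hu) hub) (lt_irrefl b)
  -- b ∈ NR T with witness a
  have haj : a ≠ j := by
    rintro rfl
    rcases hai with rfl | hR
    · exact hij rfl
    · exact hnS (Rrel_symm hR)
  have hRTaj : Rrel T a j := by
    rcases hai with rfl | hR
    · exact hRT
    · exact Rrel_trans (Rrel_mono hST hR) hRT haj
  have hRTab : Rrel T a b := by
    rcases hbj with rfl | hR
    · exact hRTaj
    · exact Rrel_trans hRTaj (Rrel_mono hST (Rrel_symm hR)) (ne_of_lt hab)
  have hbT : b ∈ NR T := by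
    simp only [NR, Finset.mem_filter, Finset.mem_univ, true_and]
    exact ⟨a, hab, hRTab⟩
  exact Finset.card_lt_card ((Finset.ssubset_iff_of_subset (NR_mono hST)).mpr ⟨b, hbT, hbS⟩)

lemma NR_mid {S : Subsemigroup (Brandt G n)} {i j m : Fin n} (hij : i ≠ j)
    (hnS : ¬ Rrel S i j) (hai : m = i ∨ Rrel S m i) (hbj : m = j ∨ Rrel S m j) : False := by
  rcases hai with rfl | hR1
  · rcases hbj with h2 | hR2
    · exact hij h2
    · exact hnS hR2
  · rcases hbj with h2 | hR2
    · subst h2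
      exact hnS (Rrel_symm hR1)
    · exact hnS (Rrel_trans (Rrel_symm hR1) hR2 hij)

lemma NR_lt {S T : Subsemigroup (Brandt G n)} (hST : S ≤ T) {i j : Fin n} (hij : i ≠ j)
    (hnS : ¬ Rrel S i j) (hRT : Rrel T i j) : (NR S).card < (NR T).card := by
  rcases lt_trichotomy ((cls S i).min' (cls_nonempty S i)) ((cls S j).min' (cls_nonempty S j))
    with h | h | h
  · exact NR_lt_aux hST hij hnS hRT (mem_cls.mp ((cls S i).min'_mem _))
      (mem_cls.mp ((cls S j).min'_mem _)) (fun u hu => (cls S j).min'_le u hu) h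
  · exact absurd (mem_cls.mp ((cls S j).min'_mem (cls_nonempty S j)))
      (fun hbj => NR_mid hij hnS (h ▸ mem_cls.mp ((cls S i).min'_mem (cls_nonempty S i))) hbj)
  · exact NR_lt_aux hST (Ne.symm hij) (fun hR => hnS (Rrel_symm hR)) (Rrel_symm hRT)
      (mem_cls.mp ((cls S j).min'_mem _)) (mem_cls.mp ((cls S i).min'_mem _))
      (fun u hu => (cls S i).min'_le u hu) h

/-- the measure is strictly monotone on subsemigroups of the Brandt semigroup -/
lemma mu_strictMono {S T : Subsemigroup (Brandt G n)} (hST : S < T) : mu S < mu T := by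
  have hle : S ≤ T := le_of_lt hST
  obtain ⟨x, hxT, hxS⟩ := SetLike.exists_of_lt hST
  match x with
  | none =>
    refine mu_lt_of_z hle ?_
    have hxS' : (bzero : Brandt G n) ∉ S := hxS
    have hxT' : (bzero : Brandt G n) ∈ T := hxT
    rw [if_neg hxS', if_pos hxT']
    omega
  | some (i, g, j) =>
    by_cases hij : i = j
    · subst hij
      by_cases hD : (BE S i i).Nonempty
      · exact mu_lt_of_dterm hle i (dterm_lt_of_grow hle i hD hxT hxS)
      · exact mu_lt_of_dterm hle i (dterm_lt_of_new hle i hD ⟨g, hxT⟩)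
    · by_cases hji : (BE T j i).Nonempty
      · by_cases hS2 : (BE S i j).Nonempty ∧ (BE S j i).Nonempty
        · -- two-sided already in S : the diagonal at j must grow
          obtain ⟨⟨a, ha⟩, ⟨b, hb⟩⟩ := hS2
          have hba : b * a ∈ BE S j j := BE_mul_mem hb ha
          have hbg : b * g ∈ BE T j j := BE_mul_mem (BE_mono hle j i hb) hxT
          have hnot : b * g ∉ BE S j j := by
            intro hmem
            apply hxS
            have hinv : (b * a)⁻¹ ∈ BE S j j := inv_mem_closed (BE_closed S j) hba
            have h1 : a * (b * a)⁻¹ ∈ BE S i j := BE_mul_mem ha hinv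
            have h2 : a * (b * a)⁻¹ * (b * g) ∈ BE S i j := BE_mul_mem h1 hmem
            have heq : a * (b * a)⁻¹ * (b * g) = g := by group
            rwa [heq] at h2
          exact mu_lt_of_dterm hle j (dterm_lt_of_grow hle j ⟨_, hba⟩ hbg hnot)
        · -- newly two-sided
          have hRT : Rrel T i j := ⟨hij, ⟨g, hxT⟩, hji⟩
          by_cases hDS : (BE S i i).Nonempty ∧ (BE S j j).Nonempty
          · have hnS : ¬ Rrel S i j := fun h => hS2 ⟨h.2.1, h.2.2⟩
            exact mu_lt_of_nr hle (NR_lt hle hij hnS hRT)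
          · rw [not_and_or] at hDS
            obtain ⟨h', hh'⟩ := hji
            rcases hDS with hDS | hDS
            · exact mu_lt_of_dterm hle i
                (dterm_lt_of_new hle i hDS ⟨g * h', BE_mul_mem hxT hh'⟩)
            · exact mu_lt_of_dterm hle j
                (dterm_lt_of_new hle j hDS ⟨h' * g, BE_mul_mem hh' hxT⟩)
      · -- one-directional : the pair term grows
        have hSji : (BE S j i) = ∅ :=
          Set.not_nonempty_iff_eq_empty.mp (fun hne => hji (hne.mono (BE_mono hle j i)))
        have hTji : (BE T j i) = ∅ := Set.not_nonempty_iff_eq_empty.mp hji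
        have hcard : (BE S i j).ncard < (BE T i j).ncard := by
          apply Set.ncard_lt_ncard _ (Set.toFinite _)
          exact ⟨BE_mono hle i j, fun hsub => hxS (hsub hxT)⟩
        rcases lt_or_gt_of_ne hij with hlt | hlt
        · refine mu_lt_of_pair hle hlt ?_
          unfold pairterm
          rw [hSji, hTji]
          simpa [Set.ncard_empty] using hcard
        · refine mu_lt_of_pair hle hlt ?_
          unfold pairterm
          rw [hSji, hTji]
          simpa [Set.ncard_empty] using hcard
  
end BrandtStrict
section BrandtBound
set_option linter.unusedSectionVars false
open scoped Classical

variable {G : Type*} [Group G] [Fintype G] {n : ℕ}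

lemma dterm_le (S : Subsemigroup (Brandt G n)) (i : Fin n) :
    dterm S i ≤ groupLength G + 1 := by
  unfold dterm
  split_ifs with h
  · have h1 : glen (BE S i i) ≤ glen (Set.univ : Set G) :=
      glen_mono (BE_closed S i) h (Set.subset_univ _)
    rw [glen_univ] at h1
    omega
  · omega

lemma NR_card_le (hn : 0 < n) (S : Subsemigroup (Brandt G n)) : (NR S).card ≤ n - 1 := by
  have hsub : NR S ⊆ Finset.univ.erase (⟨0, hn⟩ : Fin n) := by
    intro j hj
    simp only [NR, Finset.mem_filter, Finset.mem_univ, true_and] at hj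
    obtain ⟨i, hij, -⟩ := hj
    refine Finset.mem_erase.mpr ⟨?_, Finset.mem_univ j⟩
    intro hj0
    rw [hj0] at hij
    exact absurd hij (by simp [Fin.lt_def])
  have := Finset.card_le_card hsub
  rwa [Finset.card_erase_of_mem (Finset.mem_univ _), Finset.card_univ, Fintype.card_fin] at this

lemma pairterm_le (S : Subsemigroup (Brandt G n)) (i j : Fin n) :
    pairterm S i j ≤ Fintype.card G := by
  have h1 : (BE S i j).ncard ≤ Fintype.card G := by
    have := Set.ncard_le_ncard (Set.subset_univ (BE S i j)) (Set.toFinite _)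
    rwa [Set.ncard_univ, Nat.card_eq_fintype_card] at this
  have h2 : (BE S j i).ncard ≤ Fintype.card G := by
    have := Set.ncard_le_ncard (Set.subset_univ (BE S j i)) (Set.toFinite _)
    rwa [Set.ncard_univ, Nat.card_eq_fintype_card] at this
  exact max_le h1 h2

lemma pairsum_le (S : Subsemigroup (Brandt G n)) :
    (∑ j : Fin n, ∑ i ∈ Finset.Iio j, pairterm S i j) ≤ (n * (n - 1) / 2) * Fintype.card G := by
  have h1 : (∑ j : Fin n, ∑ i ∈ Finset.Iio j, pairterm S i j) ≤
      ∑ j : Fin n, (j.val * Fintype.card G) := by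
    refine Finset.sum_le_sum fun j _ => ?_
    calc ∑ i ∈ Finset.Iio j, pairterm S i j ≤ ∑ _i ∈ Finset.Iio j, Fintype.card G :=
          Finset.sum_le_sum fun i _ => pairterm_le S i j
      _ = (Finset.Iio j).card * Fintype.card G := by rw [Finset.sum_const, smul_eq_mul]
      _ = j.val * Fintype.card G := by rw [Fin.card_Iio]
  have h2 : (∑ j : Fin n, (j.val * Fintype.card G)) = (n * (n-1) / 2) * Fintype.card G := by
    rw [← Finset.sum_mul]
    congr 1
    rw [Fin.sum_univ_eq_sum_range (fun m => m) n]
    exact Finset.sum_range_id n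
  omega

lemma mu_le (hn : 0 < n) (S : Subsemigroup (Brandt G n)) :
    mu S ≤ 1 + n * (groupLength G + 1) + (n - 1) + (n * (n - 1) / 2) * Fintype.card G := by
  unfold mu
  have h1 : (if (bzero : Brandt G n) ∈ S then 1 else 0) ≤ 1 := by split_ifs <;> omega
  have h2 : (∑ i : Fin n, dterm S i) ≤ n * (groupLength G + 1) := by
    calc (∑ i : Fin n, dterm S i) ≤ ∑ _i : Fin n, (groupLength G + 1) :=
          Finset.sum_le_sum fun i _ => dterm_le S i
      _ = n * (groupLength G + 1) := by
          rw [Finset.sum_const, smul_eq_mul, Finset.card_univ, Fintype.card_fin]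
  have h3 := NR_card_le hn S
  have h4 := pairsum_le S
  omega

lemma mu_pos {S : Subsemigroup (Brandt G n)} (hS : ((S : Set (Brandt G n))).Nonempty) :
    1 ≤ mu S := by
  obtain ⟨x, hx⟩ := hS
  unfold mu
  match x with
  | none =>
    have : (if (bzero : Brandt G n) ∈ S then 1 else 0) = 1 := if_pos hx
    omega
  | some (i, g, j) =>
    by_cases hij : i = j
    · subst hij
      have hd : 1 ≤ dterm S i := by
        unfold dterm
        rw [if_pos ⟨g, hx⟩]
        omega
      have : dterm S i ≤ ∑ k : Fin n, dterm S k :=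
        Finset.single_le_sum (fun k _ => Nat.zero_le _) (Finset.mem_univ i)
      omega
    · have hcard : 1 ≤ (BE S i j).ncard :=
        (Set.ncard_pos (Set.toFinite _)).mpr ⟨g, hx⟩
      rcases lt_or_gt_of_ne hij with hlt | hlt
      · have hp : 1 ≤ pairterm S i j := le_trans hcard (le_max_left _ _)
        have h5 : pairterm S i j ≤ ∑ i' ∈ Finset.Iio j, pairterm S i' j :=
          Finset.single_le_sum (f := fun i' => pairterm S i' j)
            (fun k _ => Nat.zero_le _) (Finset.mem_Iio.mpr hlt)
        have h6 : (∑ i' ∈ Finset.Iio j, pairterm S i' j) ≤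
            ∑ j' : Fin n, ∑ i' ∈ Finset.Iio j', pairterm S i' j' :=
          Finset.single_le_sum (f := fun j' => ∑ i' ∈ Finset.Iio j', pairterm S i' j')
            (fun k _ => Nat.zero_le _) (Finset.mem_univ j)
        omega
      · have hp : 1 ≤ pairterm S j i := le_trans hcard (le_max_right _ _)
        have h5 : pairterm S j i ≤ ∑ i' ∈ Finset.Iio i, pairterm S i' i :=
          Finset.single_le_sum (f := fun i' => pairterm S i' i)
            (fun k _ => Nat.zero_le _) (Finset.mem_Iio.mpr hlt)
        have h6 : (∑ i' ∈ Finset.Iio i, pairterm S i' i) ≤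
            ∑ j' : Fin n, ∑ i' ∈ Finset.Iio j', pairterm S i' j' :=
          Finset.single_le_sum (f := fun j' => ∑ i' ∈ Finset.Iio j', pairterm S i' j')
            (fun k _ => Nat.zero_le _) (Finset.mem_univ i)
        omega

/-- every chain length of the Brandt semigroup is at most the target -/
lemma brandt_chain_le (hn : 0 < n) {k : ℕ} (c : Fin (k + 1) → Subsemigroup (Brandt G n))
    (hc : StrictMono c) (hne : ∀ i, ((c i : Set (Brandt G n))).Nonempty) :
    k ≤ n * (groupLength G + 2) + n * (n - 1) / 2 * Fintype.card G - 1 := by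
  have key : ∀ m : ℕ, (hm : m ≤ k) → 1 + m ≤ mu (c ⟨m, by omega⟩) := by
    intro m
    induction m with
    | zero => intro hm; simpa using mu_pos (hne ⟨0, by omega⟩)
    | succ m ih =>
      intro hm
      have h1 := ih (by omega)
      have h2 : mu (c ⟨m, by omega⟩) < mu (c ⟨m + 1, by omega⟩) :=
        mu_strictMono (hc (by simp only [Fin.mk_lt_mk]; omega))
      omega
  have h3 := key k le_rfl
  have h4 := mu_le hn (c ⟨k, by omega⟩)
  have h5 : n * (groupLength G + 2) = n * (groupLength G + 1) + n := by ring
  omega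

end BrandtBound
section BrandtLower
set_option linter.unusedSectionVars false
open scoped Classical

variable {G : Type*} [Group G] [Fintype G] {n : ℕ}

/-- build a subsemigroup of `B(G,n)` containing zero from blockwise data -/
def mkS (P : Fin n → Fin n → Set G)
    (hP : ∀ i j k g h, g ∈ P i j → h ∈ P j k → g * h ∈ P i k) :
    Subsemigroup (Brandt G n) where
  carrier := fun x => match x with
    | none => True
    | some (i, g, j) => g ∈ P i j
  mul_mem' := by
    intro a b ha hb
    match a, b with
    | none, none => trivial
    | none, some _ => trivial
    | some _, none => trivial
    | some (i, g, j), some (k, h, l) =>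
      show bsome i g j * bsome k h l ∈ _
      rw [brandt_mul_some]
      split_ifs with hjk
      · subst hjk
        exact hP i j l g h ha hb
      · trivial

lemma mem_mkS_some {P : Fin n → Fin n → Set G} {hP} {i j : Fin n} {g : G} :
    bsome i g j ∈ mkS P hP ↔ g ∈ P i j := Iff.rfl

lemma mem_mkS_none {P : Fin n → Fin n → Set G} {hP} : (bzero : Brandt G n) ∈ mkS P hP :=
  trivial

lemma mkS_le {P Q : Fin n → Fin n → Set G} {hP hQ} (h : ∀ i j, P i j ⊆ Q i j) :
    mkS P hP ≤ mkS Q hQ := by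
  intro x hx
  match x with
  | none => trivial
  | some (i, g, j) => exact h i j hx

lemma mkS_lt {P Q : Fin n → Fin n → Set G} {hP hQ} (h : ∀ i j, P i j ⊆ Q i j)
    (i j : Fin n) (g : G) (hg : g ∈ Q i j) (hng : g ∉ P i j) : mkS P hP < mkS Q hQ :=
  lt_of_le_of_ne (mkS_le h) (fun he => hng (by rw [← mem_mkS_some (hP := hP), he]; exact hg))

lemma mkS_eq {P Q : Fin n → Fin n → Set G} {hP hQ} (h : ∀ i j, P i j = Q i j) :
    mkS P hP = mkS Q hQ := by
  have hPQ : P = Q := funext fun i => funext fun j => h i j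
  subst hPQ
  rfl

/-- rows `< r` entirely filled -/
def PF (r : ℕ) : Fin n → Fin n → Set G := fun i _ => if i.val < r then Set.univ else ∅

lemma PF_closed (r : ℕ) :
    ∀ i j k : Fin n, ∀ g h : G, g ∈ PF r i j → h ∈ PF r j k → g * h ∈ PF r i k := by
  intro i j k g h hg hh
  unfold PF at *
  split_ifs with hi
  · trivial
  · rw [if_neg hi] at hg
    exact absurd hg (Set.notMem_empty g)

/-- the subsemigroup with rows `< r` entirely filled, plus zero -/
def FullS (r : ℕ) : Subsemigroup (Brandt G n) := mkS (PF r) (PF_closed r)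

/-- rows `< rr` full; row `rr` has diagonal `K`, forward part `F`, backward part empty -/
def PRow (rr : Fin n) (K : Set G) (F : Fin n → Set G) : Fin n → Fin n → Set G :=
  fun i j => if i < rr then Set.univ
    else if i = rr then (if j = i then K else if i < j then F j else ∅) else ∅

lemma PRow_closed (rr : Fin n) (K : Set G) (F : Fin n → Set G)
    (hK : ∀ a ∈ K, ∀ b ∈ K, a * b ∈ K)
    (hKF : ∀ j : Fin n, ∀ g ∈ K, ∀ h ∈ F j, g * h ∈ F j) :
    ∀ i j k : Fin n, ∀ g h : G, g ∈ PRow rr K F i j → h ∈ PRow rr K F j k →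
      g * h ∈ PRow rr K F i k := by
  intro i j k g h hg hh
  unfold PRow at *
  by_cases hi : i < rr
  · rw [if_pos hi]; trivial
  · rw [if_neg hi] at hg ⊢
    by_cases hieq : i = rr
    · rw [if_pos hieq] at hg ⊢
      by_cases hji : j = i
      · -- g ∈ K
        rw [if_pos hji] at hg
        rw [hji] at hh
        -- now `h ∈ P i k` with i = rr
        rw [if_neg hi, if_pos hieq] at hh
        by_cases hkj : k = i
        · rw [if_pos hkj] at hh ⊢
          exact hK g hg h hh
        · rw [if_neg hkj] at hh ⊢
          by_cases hik : i < k
          · rw [if_pos hik] at hh ⊢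
            exact hKF k g hg h hh
          · rw [if_neg hik] at hh
            exact absurd hh (Set.notMem_empty h)
      · rw [if_neg hji] at hg
        by_cases hij : i < j
        · -- g ∈ F j with rr < j ; row j is empty
          rw [if_pos hij] at hg
          have hrrj : rr < j := hieq ▸ hij
          have hjrr : ¬ j < rr := fun hc => absurd (hc.trans hrrj) (lt_irrefl j)
          have hjne : j ≠ rr := ne_of_gt hrrj
          rw [if_neg hjrr, if_neg hjne] at hh
          exact absurd hh (Set.notMem_empty h)
        · rw [if_neg hij] at hg
          exact absurd hg (Set.notMem_empty g)
    · rw [if_neg hieq] at hg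
      exact absurd hg (Set.notMem_empty g)

/-- row-in-progress subsemigroup -/
def RowS (rr : Fin n) (K : Subgroup G) (F : Fin n → Set G)
    (hKF : ∀ j : Fin n, ∀ g ∈ (K : Set G), ∀ h ∈ F j, g * h ∈ F j) :
    Subsemigroup (Brandt G n) :=
  mkS (PRow rr (K : Set G) F)
    (PRow_closed rr (K : Set G) F (fun a ha b hb => K.mul_mem ha hb) hKF)

end BrandtLower
section BrandtChain
set_option linter.unusedSectionVars false
open scoped Classical

variable {G : Type*} [Group G] [Fintype G] {n : ℕ}

/-- `k`-step strict chains between two subsemigroups -/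
def Reach (S T : Subsemigroup (Brandt G n)) (k : ℕ) : Prop :=
  ∃ c : ℕ → Subsemigroup (Brandt G n), c 0 = S ∧ c k = T ∧ ∀ m < k, c m < c (m + 1)

lemma Reach.of_eq {S T : Subsemigroup (Brandt G n)} (h : S = T) : Reach S T 0 :=
  ⟨fun _ => S, rfl, h, by omega⟩

lemma Reach.single {S T : Subsemigroup (Brandt G n)} (h : S < T) : Reach S T 1 := by
  refine ⟨fun m => if m = 0 then S else T, by simp, by simp, ?_⟩
  intro m hm
  have hm0 : m = 0 := by omega
  subst hm0
  simpa using h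

lemma Reach.trans {S T U : Subsemigroup (Brandt G n)} {a b : ℕ}
    (h1 : Reach S T a) (h2 : Reach T U b) : Reach S U (a + b) := by
  obtain ⟨c, hc0, hca, hcs⟩ := h1
  obtain ⟨d, hd0, hdb, hds⟩ := h2
  refine ⟨fun m => if m ≤ a then c m else d (m - a), by simp [hc0], ?_, ?_⟩
  · show (if a + b ≤ a then c (a + b) else d (a + b - a)) = U
    by_cases hb : b = 0
    · subst hb
      rw [if_pos (by omega), Nat.add_zero, hca, ← hd0]
      exact hdb
    · rw [if_neg (by omega), show a + b - a = b by omega]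
      exact hdb
  · intro m hm
    show (if m ≤ a then c m else d (m - a)) < (if m + 1 ≤ a then c (m + 1) else d (m + 1 - a))
    rcases Nat.lt_or_ge m a with h | h
    · rw [if_pos (by omega), if_pos (by omega)]
      exact hcs m h
    · rcases Nat.eq_or_lt_of_le h with heq | h'
      · rw [if_pos (by omega), if_neg (by omega), show m + 1 - a = 1 by omega, ← heq, hca, ← hd0]
        exact hds 0 (by omega)
      · rw [if_neg (by omega), if_neg (by omega), show m + 1 - a = (m - a) + 1 by omega]
        exact hds (m - a) (by omega)

lemma Reach.congr_len {S T : Subsemigroup (Brandt G n)} {k k' : ℕ} (h : Reach S T k)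
    (hk : k = k') : Reach S T k' := hk ▸ h

/-- forward-fill sets for row filling -/
def Ffun (c : ℕ) (A : Set G) : Fin n → Set G :=
  fun j => if j.val < c then Set.univ else if j.val = c then A else ∅

lemma hKF_bot (F : Fin n → Set G) :
    ∀ j : Fin n, ∀ g ∈ ((⊥ : Subgroup G) : Set G), ∀ h ∈ F j, g * h ∈ F j := by
  intro j g hg h hh
  have : g = 1 := by simpa using hg
  subst this
  rwa [one_mul]

lemma hKF_univ (K : Subgroup G) :
    ∀ j : Fin n, ∀ g ∈ (K : Set G), ∀ h ∈ (fun _ : Fin n => (Set.univ : Set G)) j,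
      g * h ∈ (fun _ : Fin n => (Set.univ : Set G)) j :=
  fun _ _ _ _ _ => Set.mem_univ _

lemma PRow_mono (rr : Fin n) {K K' : Set G} {F F' : Fin n → Set G} (hK : K ⊆ K')
    (hF : ∀ j, F j ⊆ F' j) : ∀ i j, PRow rr K F i j ⊆ PRow rr K' F' i j := by
  intro i j
  unfold PRow
  split_ifs
  · exact le_rfl
  · exact hK
  · exact hF j
  · exact le_rfl
  · exact le_rfl

/-- Step: starting a new row with the trivial idempotent -/
lemma segRow (rr : Fin n) :
    Reach (FullS rr.val) (RowS rr (⊥ : Subgroup G) (Ffun (rr.val + 1) ∅) (hKF_bot _)) 1 := by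
  apply Reach.single
  unfold FullS RowS
  refine mkS_lt ?_ rr rr 1 ?_ ?_
  · intro i j g hg
    unfold PF at hg
    unfold PRow
    by_cases h1 : i.val < rr.val
    · rw [if_pos (by rwa [Fin.lt_def])]
      trivial
    · rw [if_neg h1] at hg
      exact absurd hg (Set.notMem_empty g)
  · unfold PRow
    rw [if_neg (lt_irrefl rr), if_pos rfl, if_pos rfl]
    simp
  · unfold PF
    rw [if_neg (lt_irrefl rr.val)]
    exact Set.notMem_empty 1

/-- the partial fill sets -/
def Aset (m : ℕ) : Set G := {g | ((Fintype.equivFin G) g).val < m}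

lemma Aset_zero : (Aset 0 : Set G) = ∅ := by
  ext g; simp [Aset]

lemma Aset_full : (Aset (Fintype.card G) : Set G) = Set.univ := by
  ext g; simp [Aset, Fin.is_lt]

/-- Step: filling one forward block, one element at a time -/
lemma segFill (rr : Fin n) (c : ℕ) (hc1 : rr.val < c) (hc2 : c < n) :
    Reach (RowS rr (⊥ : Subgroup G) (Ffun c ∅) (hKF_bot _)) (RowS rr (⊥ : Subgroup G) (Ffun c Set.univ) (hKF_bot _))
      (Fintype.card G) := by
  refine ⟨fun m => RowS rr (⊥ : Subgroup G) (Ffun c (Aset m)) (hKF_bot _), ?_, ?_, ?_⟩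
  · unfold RowS
    exact mkS_eq (fun i j => by simp only [PRow, Ffun, Aset_zero])
  · unfold RowS
    exact mkS_eq (fun i j => by simp only [PRow, Ffun, Aset_full])
  · intro m hm
    set jc : Fin n := ⟨c, hc2⟩ with hjc
    unfold RowS
    refine mkS_lt ?_ rr jc ((Fintype.equivFin G).symm ⟨m, hm⟩) ?_ ?_
    · apply PRow_mono rr le_rfl
      intro j
      unfold Ffun
      split_ifs
      · exact le_rfl
      · intro g hg
        show ((Fintype.equivFin G) g).val < m + 1
        have : ((Fintype.equivFin G) g).val < m := hg
        omega
      · exact le_rfl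
    · unfold PRow
      have hne : jc ≠ rr := by
        intro h
        rw [Fin.ext_iff] at h
        simp only [hjc] at h
        omega
      rw [if_neg (lt_irrefl rr), if_pos rfl, if_neg hne,
        if_pos (by rw [Fin.lt_def]; exact hc1)]
      unfold Ffun
      rw [if_neg (by simp [hjc]), if_pos (by simp [hjc])]
      show ((Fintype.equivFin G) ((Fintype.equivFin G).symm ⟨m, hm⟩)).val < m + 1
      rw [Equiv.apply_symm_apply]
      show m < m + 1
      omega
    · unfold PRow
      have hne : jc ≠ rr := by
        intro h
        rw [Fin.ext_iff] at h
        simp only [hjc] at h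
        omega
      rw [if_neg (lt_irrefl rr), if_pos rfl, if_neg hne,
        if_pos (by rw [Fin.lt_def]; exact hc1)]
      unfold Ffun
      rw [if_neg (by simp [hjc]), if_pos (by simp [hjc])]
      show ¬ ((Fintype.equivFin G) ((Fintype.equivFin G).symm ⟨m, hm⟩)).val < m
      rw [Equiv.apply_symm_apply]
      show ¬ m < m
      omega

/-- Filling all forward blocks of row `rr` -/
lemma segFwd (rr : Fin n) : ∀ t, rr.val + 1 + t ≤ n →
    Reach (RowS rr (⊥ : Subgroup G) (Ffun (rr.val + 1) ∅) (hKF_bot _))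
      (RowS rr (⊥ : Subgroup G) (Ffun (rr.val + 1 + t) ∅) (hKF_bot _)) (t * Fintype.card G) := by
  intro t
  induction t with
  | zero =>
    intro _
    exact (Reach.of_eq
      (Eq.refl (RowS rr (⊥ : Subgroup G) (Ffun (rr.val + 1) ∅) (hKF_bot _)))).congr_len
      (zero_mul _).symm
  | succ t ih =>
    intro ht
    have h1 := ih (by omega)
    have h2 := segFill (G := G) rr (rr.val + 1 + t) (by omega) (by omega)
    have h3 : RowS rr (⊥ : Subgroup G) (Ffun (rr.val + 1 + t) Set.univ) (hKF_bot _) =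
        RowS rr (⊥ : Subgroup G) (Ffun (rr.val + 1 + (t + 1)) ∅) (hKF_bot (n := n) _) := by
      have hFs : (Ffun (rr.val + 1 + t) Set.univ : Fin n → Set G) =
          Ffun (rr.val + 1 + (t + 1)) ∅ := by
        funext j
        unfold Ffun
        split_ifs <;> first | rfl | omega
      unfold RowS
      apply mkS_eq
      intro i j
      simp only [PRow, hFs]
    rw [h3] at h2
    have := h1.trans h2
    exact this.congr_len (by ring)

/-- Growing the diagonal subgroup of row `rr` along an optimal subgroup chain -/
lemma segDiag (rr : Fin n) :
    Reach (RowS rr (⊥ : Subgroup G) (fun _ => Set.univ) (hKF_univ ⊥))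
      (RowS rr (⊤ : Subgroup G) (fun _ => Set.univ) (hKF_univ ⊤)) (groupLength G) := by
  obtain ⟨d, hd0, hdL, hds⟩ := exists_opt_subgroup_chain (G := G)
  refine ⟨fun m => RowS rr (d m) (fun _ => Set.univ) (hKF_univ _), ?_, ?_, ?_⟩
  · exact congrArg (fun K : Subgroup G => RowS rr K (fun _ => Set.univ) (hKF_univ K)) hd0
  · exact congrArg (fun K : Subgroup G => RowS rr K (fun _ => Set.univ) (hKF_univ K)) hdL
  · intro m hm
    obtain ⟨g, hgT, hgS⟩ := SetLike.exists_of_lt (hds m hm)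
    unfold RowS
    refine mkS_lt ?_ rr rr g ?_ ?_
    · exact PRow_mono rr (fun y hy => (hds m hm).le hy) (fun j => le_rfl)
    · unfold PRow
      rw [if_neg (lt_irrefl rr), if_pos rfl, if_pos rfl]
      exact hgT
    · unfold PRow
      rw [if_neg (lt_irrefl rr), if_pos rfl, if_pos rfl]
      exact hgS

/-- For row 0, the completed row-state *is* `FullS 1`. -/
lemma segTop (rr : Fin n) (h0 : rr.val = 0) :
    RowS rr (⊤ : Subgroup G) (fun _ => Set.univ) (hKF_univ ⊤) = (FullS 1 : Subsemigroup (Brandt G n)) := by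
  unfold RowS FullS
  apply mkS_eq
  intro i j
  unfold PRow PF
  have hi0 : ¬ i < rr := by rw [Fin.lt_def, h0]; omega
  rw [if_neg hi0]
  by_cases h2 : i = rr
  · have hival : i.val = 0 := by rw [Fin.ext_iff] at h2; omega
    rw [if_pos h2, if_pos (by omega : i.val < 1)]
    by_cases h3 : j = i
    · rw [if_pos h3, Subgroup.coe_top]
    · have h4 : i < j := by
        rw [Fin.lt_def]
        rw [Fin.ext_iff] at h3
        omega
      rw [if_neg h3, if_pos h4]
  · have hival : ¬ i.val < 1 := by rw [Fin.ext_iff, h0] at h2; omega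
    rw [if_neg h2, if_neg hival]

/-- For rows `r ≥ 1`, adding the whole backward part in a single step. -/
lemma segBack (rr : Fin n) (hr : 1 ≤ rr.val) :
    Reach (RowS rr (⊤ : Subgroup G) (fun _ => Set.univ) (hKF_univ ⊤)) (FullS (rr.val + 1)) 1 := by
  apply Reach.single
  have hn0 : 0 < n := rr.pos
  unfold RowS FullS
  refine mkS_lt ?_ rr ⟨0, hn0⟩ 1 ?_ ?_
  · intro i j g hg
    unfold PRow at hg
    unfold PF
    by_cases h1 : i < rr
    · rw [if_pos (by rw [Fin.lt_def] at h1; omega)]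
      trivial
    · rw [if_neg h1] at hg
      by_cases h2 : i = rr
      · rw [if_pos (by rw [Fin.ext_iff] at h2; omega)]
        trivial
      · rw [if_neg h2] at hg
        exact absurd hg (Set.notMem_empty g)
  · unfold PF
    rw [if_pos (by omega)]
    trivial
  · unfold PRow
    have hne : (⟨0, hn0⟩ : Fin n) ≠ rr := by
      intro h
      rw [Fin.ext_iff] at h
      simp at h
      omega
    have hnlt : ¬ rr < (⟨0, hn0⟩ : Fin n) := by
      rw [Fin.lt_def]
      simp
    rw [if_neg (lt_irrefl rr), if_pos rfl, if_neg hne, if_neg hnlt]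
    exact Set.notMem_empty 1

end BrandtChain
section BrandtAssemble
set_option linter.unusedSectionVars false
open scoped Classical

variable {G : Type*} [Group G] [Fintype G] {n : ℕ}

lemma rowS_full_eq (rr : Fin n) (K : Subgroup G) {hKF hKF'} :
    RowS rr K (Ffun (rr.val + 1 + (n - 1 - rr.val)) ∅) hKF =
      RowS rr K (fun _ => Set.univ) hKF' := by
  have hF : (Ffun (rr.val + 1 + (n - 1 - rr.val)) ∅ : Fin n → Set G) = fun _ => Set.univ := by
    funext j
    unfold Ffun
    rw [if_pos (by have h1 := j.isLt; have h2 := rr.isLt; omega)]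
  unfold RowS
  apply mkS_eq
  intro i j
  simp only [PRow, hF]

/-- processing row 0 completely -/
lemma rowReach0 (hn : 0 < n) :
    Reach (FullS 0 : Subsemigroup (Brandt G n)) (FullS 1)
      (((1 + (n - 1) * Fintype.card G) + groupLength G)) := by
  set rr : Fin n := ⟨0, hn⟩ with hrr
  have h5 : rr.val = 0 := rfl
  have h1 := segRow (G := G) rr
  have h2 := segFwd (G := G) rr (n - 1 - rr.val) (by have := rr.isLt; omega)
  have h3 := segDiag (G := G) rr
  rw [rowS_full_eq rr ⊥ (hKF' := hKF_univ ⊥)] at h2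
  have h4 := (h1.trans h2).trans h3
  rw [segTop rr h5] at h4
  rw [h5, Nat.sub_zero] at h4
  exact h4

/-- processing row `r ≥ 1` completely -/
lemma rowReachPos (rr : Fin n) (hr : 1 ≤ rr.val) :
    Reach (FullS rr.val : Subsemigroup (Brandt G n)) (FullS (rr.val + 1))
      ((((1 + (n - 1 - rr.val) * Fintype.card G) + groupLength G) + 1)) := by
  have h1 := segRow (G := G) rr
  have h2 := segFwd (G := G) rr (n - 1 - rr.val) (by have := rr.isLt; omega)
  have h3 := segDiag (G := G) rr
  have h5 := segBack (G := G) rr hr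
  rw [rowS_full_eq rr ⊥ (hKF' := hKF_univ ⊥)] at h2
  exact ((h1.trans h2).trans h3).trans h5

/-- the full chain, row by row -/
lemma reachFull (hn : 0 < n) : ∀ m, 1 ≤ m → m ≤ n →
    Reach (FullS 0 : Subsemigroup (Brandt G n)) (FullS m)
      (m * (groupLength G + 2) - 1 +
        (∑ t ∈ Finset.range m, (n - 1 - t)) * Fintype.card G) := by
  intro m
  induction m with
  | zero => omega
  | succ m ih =>
    intro _ hmn
    rcases Nat.eq_zero_or_pos m with rfl | hm1
    · refine (rowReach0 (G := G) hn).congr_len ?_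
      rw [Finset.sum_range_one, Nat.sub_zero,
        show (0 + 1) * (groupLength G + 2) = groupLength G + 2 from by ring]
      generalize (n - 1) * Fintype.card G = A
      omega
    · have hmn' : m < n := by omega
      have hrow := rowReachPos (G := G) ⟨m, hmn'⟩ hm1
      have htot := (ih hm1 (by omega)).trans hrow
      refine htot.congr_len ?_
      have e1 : (m + 1) * (groupLength G + 2) = m * (groupLength G + 2) + (groupLength G + 2) :=
        by ring
      have e2 : ∑ t ∈ Finset.range (m + 1), (n - 1 - t) =
          (∑ t ∈ Finset.range m, (n - 1 - t)) + (n - 1 - m) := Finset.sum_range_succ _ _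
      have e3 : ((∑ t ∈ Finset.range m, (n - 1 - t)) + (n - 1 - m)) * Fintype.card G =
          (∑ t ∈ Finset.range m, (n - 1 - t)) * Fintype.card G +
            (n - 1 - m) * Fintype.card G := Nat.add_mul _ _ _
      have h1 : 1 ≤ m * (groupLength G + 2) := Nat.mul_pos (by omega) (by omega)
      rw [e1, e2, e3]
      generalize m * (groupLength G + 2) = A at h1 ⊢
      generalize (∑ t ∈ Finset.range m, (n - 1 - t)) * Fintype.card G = B
      generalize (n - 1 - m) * Fintype.card G = C
      omega

lemma target_mem (hn : 0 < n) :
    (n * (groupLength G + 2) + n * (n - 1) / 2 * Fintype.card G - 1) ∈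
      {k : ℕ | ∃ c : Fin (k + 1) → Subsemigroup (Brandt G n),
        StrictMono c ∧ ∀ i, ((c i : Set (Brandt G n))).Nonempty} := by
  have hsum : (∑ t ∈ Finset.range n, (n - 1 - t)) = n * (n - 1) / 2 := by
    have := Finset.sum_range_reflect (fun i => i) n
    rw [this, Finset.sum_range_id]
  have hreach := reachFull (G := G) hn n (by omega) le_rfl
  rw [hsum] at hreach
  have hk : n * (groupLength G + 2) - 1 + n * (n - 1) / 2 * Fintype.card G =
      n * (groupLength G + 2) + n * (n - 1) / 2 * Fintype.card G - 1 := by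
    have h1 : 1 ≤ n * (groupLength G + 2) := Nat.mul_pos (by omega) (by omega)
    generalize n * (groupLength G + 2) = A at h1 ⊢
    generalize n * (n - 1) / 2 * Fintype.card G = B
    omega
  rw [hk] at hreach
  obtain ⟨c, hc0, _, hsteps⟩ := hreach
  set k := n * (groupLength G + 2) + n * (n - 1) / 2 * Fintype.card G - 1 with hkdef
  refine ⟨fun i => c i.val, strictMono_fin_of_nat c k hsteps, ?_⟩
  have hmono : ∀ m, m ≤ k → c 0 ≤ c m := by
    intro m
    induction m with
    | zero => intro _; exact le_rfl
    | succ m ih =>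
      intro hm
      exact (ih (by omega)).trans (le_of_lt (hsteps m (by omega)))
  intro i
  refine ⟨bzero, ?_⟩
  have h0 : (bzero : Brandt G n) ∈ c 0 := by
    rw [hc0]
    exact mem_mkS_none
  exact hmono i.val (by omega) h0

end BrandtAssemble
/-- Let `G` be a finite group and `n` a positive integer.  Then the length of the Brandt
semigroup `B(G,n)` satisfies `l(B(G,n)) = n(l(G) + 2) + (n(n−1)/2)·|G| − 1`. -/
theorem semigroupLength_brandt (G : Type*) [Group G] [Fintype G] (n : ℕ) (hn : 0 < n) :
    semigroupLength (Brandt G n) =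
      n * (groupLength G + 2) + n * (n - 1) / 2 * Fintype.card G - 1 := by
  have hbound : ∀ k ∈ {k : ℕ | ∃ c : Fin (k + 1) → Subsemigroup (Brandt G n),
      StrictMono c ∧ ∀ i, ((c i : Set (Brandt G n))).Nonempty},
      k ≤ n * (groupLength G + 2) + n * (n - 1) / 2 * Fintype.card G - 1 := by
    rintro k ⟨c, hc, hne⟩
    exact brandt_chain_le hn c hc hne
  have hzero : (0 : ℕ) ∈ {k : ℕ | ∃ c : Fin (k + 1) → Subsemigroup (Brandt G n),
      StrictMono c ∧ ∀ i, ((c i : Set (Brandt G n))).Nonempty} := by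
    refine ⟨fun _ => FullS 0, fun i j hij => absurd hij (by omega), ?_⟩
    intro i
    exact ⟨bzero, mem_mkS_none⟩
  apply le_antisymm
  · exact csSup_le ⟨0, hzero⟩ hbound
  · exact le_csSup ⟨_, hbound⟩ (target_mem hn)
end
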